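/- arXiv:1503.08519 — 6 statements merged into one kernel-verified Lean document; each statement's English description precedes it below -/
import Mathlib

section
/- Let A be a C*-algebra, y ∈ A, δ > 0, and let v|y| = y be the polar decomposition of y in the enveloping von Neumann algebra A**. Define φ(t) := min(1, (2/δ)·max(t - δ/2, 0)) and q := φ(yy*)v. Then q ∈ A, q is a contraction, and for every μ ≥ δ one has q*(yy* - μ)₊ q = (y*y - μ)₊. -/
open scoped ContinuousMapZero

section Helpers

variable {M : Type*} [NonUnitalCStarAlgebra M] [PartialOrder M] [StarOrderedRing M]

lemma aux_cfcnHom_fix {a w : M} (ha : IsSelfAdjoint a) (hw : IsSelfAdjoint w)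
    (hwa : w * a = a) (f : C(quasispectrum ℝ a, ℝ)₀) :
    w * cfcₙHom (R := ℝ) ha f = cfcₙHom (R := ℝ) ha f ∧
      cfcₙHom (R := ℝ) ha f * w = cfcₙHom (R := ℝ) ha f := by
  have haw : a * w = a := by
    have h := congrArg star hwa
    rwa [star_mul, hw.star_eq, ha.star_eq] at h
  have hcont : Continuous (cfcₙHom (R := ℝ) ha) := (cfcₙHom_isClosedEmbedding ha).continuous
  have hid : cfcₙHom (R := ℝ) ha (ContinuousMapZero.id _) = a := cfcₙHom_id ha
  induction f using ContinuousMapZero.induction_on_of_compact with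
  | zero => simp
  | id => rw [hid]; exact ⟨hwa, haw⟩
  | star_id =>
      have hstar : star (ContinuousMapZero.id (quasispectrum ℝ a)) =
          ContinuousMapZero.id _ := by
        ext x; exact star_trivial _
      rw [hstar, hid]; exact ⟨hwa, haw⟩
  | add f g hf hg =>
      rw [map_add]
      exact ⟨by rw [mul_add, hf.1, hg.1], by rw [add_mul, hf.2, hg.2]⟩
  | mul f g hf hg =>
      rw [map_mul]
      exact ⟨by rw [← mul_assoc, hf.1], by rw [mul_assoc, hg.2]⟩
  | smul r f hf =>
      rw [map_smul]
      exact ⟨by rw [mul_smul_comm, hf.1], by rw [smul_mul_assoc, hf.2]⟩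
  | frequently f hf =>
      have hcl : IsClosed {g : C(quasispectrum ℝ a, ℝ)₀ |
          w * cfcₙHom (R := ℝ) ha g = cfcₙHom (R := ℝ) ha g ∧
            cfcₙHom (R := ℝ) ha g * w = cfcₙHom (R := ℝ) ha g} :=
        (isClosed_eq (continuous_const.mul hcont) hcont).inter
          (isClosed_eq (hcont.mul continuous_const) hcont)
      exact hcl.closure_subset (mem_closure_iff_frequently.mpr hf)

lemma aux_cfcnHom_mem (A : NonUnitalStarSubalgebra ℂ M) (hA : IsClosed (A : Set M))
    {a : M} (ha : IsSelfAdjoint a) (haA : a ∈ A) (f : C(quasispectrum ℝ a, ℝ)₀) :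
    cfcₙHom (R := ℝ) ha f ∈ A := by
  have hcont : Continuous (cfcₙHom (R := ℝ) ha) := (cfcₙHom_isClosedEmbedding ha).continuous
  have hid : cfcₙHom (R := ℝ) ha (ContinuousMapZero.id _) = a := cfcₙHom_id ha
  induction f using ContinuousMapZero.induction_on_of_compact with
  | zero => rw [map_zero]; exact zero_mem A
  | id => rw [hid]; exact haA
  | star_id =>
      have hstar : star (ContinuousMapZero.id (quasispectrum ℝ a)) =
          ContinuousMapZero.id _ := by
        ext x; exact star_trivial _
      rw [hstar, hid]; exact haA
  | add f g hf hg => rw [map_add]; exact add_mem hf hg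
  | mul f g hf hg => rw [map_mul]; exact mul_mem hf hg
  | smul r f hf =>
      rw [map_smul]
      have hrc : r • cfcₙHom (R := ℝ) ha f = ((r : ℂ)) • cfcₙHom (R := ℝ) ha f := by
        rw [← smul_one_smul ℂ r (cfcₙHom (R := ℝ) ha f), Complex.real_smul, mul_one]
      rw [hrc]
      exact SMulMemClass.smul_mem _ hf
  | frequently f hf =>
      exact (hA.preimage hcont).closure_subset (mem_closure_iff_frequently.mpr hf)

lemma aux_cfcnHom_conj {a b v : M} (ha : IsSelfAdjoint a) (hb : IsSelfAdjoint b)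
    (hsub : quasispectrum ℝ a ⊆ quasispectrum ℝ b) (hba : b = v * a * star v)
    (hwa : star v * v * a = a)
    (f : C(quasispectrum ℝ b, ℝ)₀) :
    cfcₙHom (R := ℝ) hb f =
      v * cfcₙHom (R := ℝ) ha
        (f.comp ⟨⟨Set.inclusion hsub, continuous_id.subtype_map hsub⟩, rfl⟩) * star v := by
  set ι : C(quasispectrum ℝ a, quasispectrum ℝ b)₀ :=
    ⟨⟨Set.inclusion hsub, continuous_id.subtype_map hsub⟩, rfl⟩ with hι
  have hw : IsSelfAdjoint (star v * v) := IsSelfAdjoint.star_mul_self v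
  have hwfix : ∀ g : C(quasispectrum ℝ a, ℝ)₀,
      star v * v * cfcₙHom (R := ℝ) ha g = cfcₙHom (R := ℝ) ha g :=
    fun g => (aux_cfcnHom_fix ha hw hwa g).1
  have hconta : Continuous (cfcₙHom (R := ℝ) ha) := (cfcₙHom_isClosedEmbedding ha).continuous
  have hcontb : Continuous (cfcₙHom (R := ℝ) hb) := (cfcₙHom_isClosedEmbedding hb).continuous
  have hida : cfcₙHom (R := ℝ) ha (ContinuousMapZero.id _) = a := cfcₙHom_id ha
  have hidb : cfcₙHom (R := ℝ) hb (ContinuousMapZero.id _) = b := cfcₙHom_id hb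
  have hidcomp : (ContinuousMapZero.id (quasispectrum ℝ b)).comp ι =
      ContinuousMapZero.id _ := by
    ext x; rfl
  induction f using ContinuousMapZero.induction_on_of_compact with
  | zero =>
      have h0c : (0 : C(quasispectrum ℝ b, ℝ)₀).comp ι = 0 := by ext x; rfl
      rw [h0c, map_zero, map_zero, mul_zero, zero_mul]
  | id => rw [hidb, hidcomp, hida]; exact hba
  | star_id =>
      have hstar : star (ContinuousMapZero.id (quasispectrum ℝ b)) =
          ContinuousMapZero.id _ := by
        ext x; exact star_trivial _
      rw [hstar, hidb, hidcomp, hida]; exact hba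
  | add f g hf hg =>
      have hc : (f + g).comp ι = f.comp ι + g.comp ι := by ext x; rfl
      rw [map_add, hf, hg, hc, map_add, mul_add, add_mul]
  | mul f g hf hg =>
      have hc : (f * g).comp ι = f.comp ι * g.comp ι := by ext x; rfl
      rw [map_mul, hf, hg, hc, map_mul]
      calc (v * cfcₙHom (R := ℝ) ha (f.comp ι) * star v) *
            (v * cfcₙHom (R := ℝ) ha (g.comp ι) * star v)
          = v * cfcₙHom (R := ℝ) ha (f.comp ι) *
              (star v * v * cfcₙHom (R := ℝ) ha (g.comp ι)) * star v := by
            simp only [mul_assoc]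
        _ = v * (cfcₙHom (R := ℝ) ha (f.comp ι) * cfcₙHom (R := ℝ) ha (g.comp ι)) * star v := by
            rw [hwfix (g.comp ι)]; simp only [mul_assoc]
  | smul r f hf =>
      have hc : (r • f).comp ι = r • (f.comp ι) := by ext x; rfl
      rw [map_smul, hf, hc, map_smul, mul_smul_comm, smul_mul_assoc]
  | frequently f hf =>
      have hcl : IsClosed {g : C(quasispectrum ℝ b, ℝ)₀ |
          cfcₙHom (R := ℝ) hb g = v * cfcₙHom (R := ℝ) ha (g.comp ι) * star v} := by
        apply isClosed_eq hcontb
        exact (continuous_const.mul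
          (hconta.comp (ContinuousMapZero.continuous_comp_left ι))).mul continuous_const
      exact hcl.closure_subset (mem_closure_iff_frequently.mpr hf)

lemma aux_quasi_sub (y : M) : quasispectrum ℝ (star y * y) ⊆ quasispectrum ℝ (y * star y) := by
  intro x hx
  rcases eq_or_ne x 0 with rfl | hx0
  · exact quasispectrum.zero_mem ℝ _
  · rw [Unitization.quasispectrum_eq_spectrum_inr' ℝ ℝ] at hx ⊢
    rw [Unitization.inr_mul] at hx ⊢
    have hmem : x ∈ spectrum ℝ ((↑(star y) : Unitization ℝ M) * ↑y) \ {0} := ⟨hx, hx0⟩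
    rw [spectrum.nonzero_mul_comm] at hmem
    exact hmem.1

end Helpers

set_option maxHeartbeats 1000000 in
/-- Let `A` be a closed non-unital star-subalgebra of a C*-algebra `M` (playing the role
of the enveloping von Neumann algebra `A**`), `y ∈ A`, `δ > 0`, and let `v ∈ M` implement
the polar decomposition of `y`, i.e. `v * |y| = y` and `star v * y = |y|` where
`|y| = (star y * y)^(1/2)`.  With `φ(t) := min 1 ((2/δ) * (t - δ/2)₊)` and
`q := φ(y * star y) * v`, the element `q` lies in `A`, is a contraction, and
`star q * (y * star y - μ)₊ * q = (star y * y - μ)₊` for every `μ ≥ δ`. -/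
theorem polar_cutdown_transfer {M : Type*} [NonUnitalCStarAlgebra M] [PartialOrder M]
    [StarOrderedRing M] (A : NonUnitalStarSubalgebra ℂ M) (hA : IsClosed (A : Set M))
    (y : M) (hy : y ∈ A) (δ : ℝ) (hδ : 0 < δ) (v : M)
    (hv1 : v * cfcₙ Real.sqrt (star y * y) = y)
    (hv2 : star v * y = cfcₙ Real.sqrt (star y * y)) :
    cfcₙ (fun t : ℝ => min 1 ((2 / δ) * max (t - δ / 2) 0)) (y * star y) * v ∈ A ∧
    ‖cfcₙ (fun t : ℝ => min 1 ((2 / δ) * max (t - δ / 2) 0)) (y * star y) * v‖ ≤ 1 ∧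
    ∀ μ : ℝ, δ ≤ μ →
      star (cfcₙ (fun t : ℝ => min 1 ((2 / δ) * max (t - δ / 2) 0)) (y * star y) * v) *
          cfcₙ (fun t : ℝ => max (t - μ) 0) (y * star y) *
          (cfcₙ (fun t : ℝ => min 1 ((2 / δ) * max (t - δ / 2) 0)) (y * star y) * v) =
        cfcₙ (fun t : ℝ => max (t - μ) 0) (star y * y) := by
  set φ : ℝ → ℝ := fun t : ℝ => min 1 ((2 / δ) * max (t - δ / 2) 0) with hφ_def
  set a : M := star y * y with ha_def
  set b : M := y * star y with hb_def
  have ha0 : (0 : M) ≤ a := star_mul_self_nonneg y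
  have hb0 : (0 : M) ≤ b := mul_star_self_nonneg y
  have haSA : IsSelfAdjoint a := ha0.isSelfAdjoint
  have hbSA : IsSelfAdjoint b := hb0.isSelfAdjoint
  set s : M := cfcₙ Real.sqrt a with hs_def
  have hsSA : IsSelfAdjoint s := by rw [hs_def]; exact cfcₙ_predicate Real.sqrt a
  have hσ_nonneg : ∀ t ∈ quasispectrum ℝ a, (0 : ℝ) ≤ t := fun t ht =>
    quasispectrum_nonneg_of_nonneg a ha0 t ht
  have hss : s * s = a := by
    rw [hs_def, ← cfcₙ_mul Real.sqrt Real.sqrt a Real.continuous_sqrt.continuousOn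
      Real.sqrt_zero Real.continuous_sqrt.continuousOn Real.sqrt_zero]
    exact (cfcₙ_congr (g := (id : ℝ → ℝ)) fun t ht => Real.mul_self_sqrt (hσ_nonneg t ht)).trans
      (cfcₙ_id ℝ a haSA)
  have hsy : star y = s * star v := by
    rw [← hv1, star_mul, hsSA.star_eq]
  have hwa : star v * v * a = a := by
    calc star v * v * a = star v * (v * s) * s := by rw [← hss]; simp only [mul_assoc]
      _ = s * s := by rw [hv1, hv2]
      _ = a := hss
  have hba : b = v * a * star v := by
    rw [hb_def, hsy, ← hv1, ← hss]
    simp only [mul_assoc]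
  have hsub : quasispectrum ℝ a ⊆ quasispectrum ℝ b := aux_quasi_sub y
  have hwSA : IsSelfAdjoint (star v * v) := IsSelfAdjoint.star_mul_self v
  have hfix : ∀ f : ℝ → ℝ, ContinuousOn f (quasispectrum ℝ a) → f 0 = 0 →
      star v * v * cfcₙ f a = cfcₙ f a ∧ cfcₙ f a * (star v * v) = cfcₙ f a := by
    intro f hf hf0
    rw [cfcₙ_apply f a hf hf0 haSA]
    exact aux_cfcnHom_fix haSA hwSA hwa _
  have hconj : ∀ f : ℝ → ℝ, ContinuousOn f (quasispectrum ℝ b) → f 0 = 0 →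
      cfcₙ f b = v * cfcₙ f a * star v := by
    intro f hf hf0
    have hfa : ContinuousOn f (quasispectrum ℝ a) := hf.mono hsub
    have harg : ((⟨⟨_, hf.restrict⟩, hf0⟩ : C(quasispectrum ℝ b, ℝ)₀).comp
        ⟨⟨Set.inclusion hsub, continuous_id.subtype_map hsub⟩, rfl⟩ :
          C(quasispectrum ℝ a, ℝ)₀) = ⟨⟨_, hfa.restrict⟩, hf0⟩ := by
      ext x; rfl
    rw [cfcₙ_apply f b hf hf0 hbSA, cfcₙ_apply f a hfa hf0 haSA,
      aux_cfcnHom_conj haSA hbSA hsub hba hwa ⟨⟨_, hf.restrict⟩, hf0⟩, harg]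
  have hmem : ∀ f : ℝ → ℝ, ContinuousOn f (quasispectrum ℝ a) → f 0 = 0 → cfcₙ f a ∈ A := by
    intro f hf hf0
    rw [cfcₙ_apply f a hf hf0 haSA]
    have haA : a ∈ A := by rw [ha_def]; exact mul_mem (star_mem hy) hy
    exact aux_cfcnHom_mem A hA haSA haA _
  -- facts about φ
  have hφc : Continuous φ := by
    rw [hφ_def]
    exact continuous_const.min
      (continuous_const.mul ((continuous_id.sub continuous_const).max continuous_const))
  have hφzero : ∀ t : ℝ, t ≤ δ / 2 → φ t = 0 := by
    intro t ht
    simp only [hφ_def]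
    rw [max_eq_right (by linarith), mul_zero, min_eq_right zero_le_one]
  have hφ0 : φ 0 = 0 := hφzero 0 (by linarith)
  have hφone : ∀ t : ℝ, δ ≤ t → φ t = 1 := by
    intro t ht
    simp only [hφ_def]
    rw [max_eq_left (by linarith),
      min_eq_left (by rw [div_mul_eq_mul_div, le_div_iff₀ hδ]; linarith)]
  have hφbound : ∀ t : ℝ, 0 ≤ φ t ∧ φ t ≤ 1 := by
    intro t
    refine ⟨?_, ?_⟩
    · simp only [hφ_def]
      exact le_min zero_le_one
        (mul_nonneg (div_nonneg (by norm_num) hδ.le) (le_max_right _ _))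
    · simp only [hφ_def]
      exact min_le_left _ _
  -- the function g = φ / sqrt
  set g : ℝ → ℝ := fun t => φ t / Real.sqrt t with hg_def
  have hgc : Continuous g := by
    rw [continuous_iff_continuousAt]
    intro x
    rcases lt_or_ge x (δ / 2) with hx | hx
    · have hev : ∀ᶠ t in nhds x, g t = 0 := by
        filter_upwards [Iio_mem_nhds hx] with t ht
        simp only [hg_def]
        rw [hφzero t (le_of_lt ht), zero_div]
      have hev' : g =ᶠ[nhds x] fun _ => (0 : ℝ) := hev
      exact (continuousAt_congr hev').mpr continuousAt_const
    · have hx0 : (0 : ℝ) < x := by linarith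
      have : ContinuousAt (fun t => φ t / Real.sqrt t) x :=
        (hφc.continuousAt).div Real.continuous_sqrt.continuousAt
          (Real.sqrt_ne_zero'.mpr hx0)
      rw [hg_def]
      exact this
  have hg0 : g 0 = 0 := by
    simp only [hg_def]
    rw [hφ0, zero_div]
  have hkey : ∀ t ∈ quasispectrum ℝ a, Real.sqrt t * g t = φ t := by
    intro t ht
    rcases eq_or_lt_of_le (hσ_nonneg t ht) with h | h
    · rw [← h]
      simp only [hg_def]
      rw [hφ0, Real.sqrt_zero, zero_div, mul_zero]
    · simp only [hg_def]
      rw [mul_comm, div_mul_cancel₀ _ (Real.sqrt_ne_zero'.mpr h)]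
  have hφconta : ContinuousOn φ (quasispectrum ℝ a) := hφc.continuousOn
  have hφcontb : ContinuousOn φ (quasispectrum ℝ b) := hφc.continuousOn
  set x : M := cfcₙ φ a with hx_def
  have hxSA : IsSelfAdjoint x := by rw [hx_def]; exact cfcₙ_predicate φ a
  have hfixvx : star v * (v * x) = x := by
    rw [hx_def, ← mul_assoc]
    exact (hfix φ hφconta hφ0).1
  have hfixxv : x * (star v * v) = x := by
    rw [hx_def]
    exact (hfix φ hφconta hφ0).2
  have hq : cfcₙ φ b * v = v * x := by
    rw [hconj φ hφcontb hφ0, ← hx_def]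
    simp only [mul_assoc]
    rw [hfixxv]
  have hfac : x = s * cfcₙ g a := by
    rw [hx_def, hs_def, ← cfcₙ_congr (a := a) hkey]
    exact cfcₙ_mul Real.sqrt g a Real.continuous_sqrt.continuousOn Real.sqrt_zero
      hgc.continuousOn hg0
  have hstarq : star (cfcₙ φ b * v) = x * star v := by
    rw [hq, star_mul, hxSA.star_eq]
  refine ⟨?_, ?_, ?_⟩
  · -- membership
    rw [hq, hfac, ← mul_assoc, hv1]
    exact mul_mem hy (hmem g hgc.continuousOn hg0)
  · -- norm bound
    have hqq : star (cfcₙ φ b * v) * (cfcₙ φ b * v) = x * x := by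
      rw [hstarq, hq]
      simp only [mul_assoc]
      rw [hfixvx]
    have hn : ‖x * x‖ ≤ 1 := by
      rw [hx_def, ← cfcₙ_mul φ φ a hφconta hφ0 hφconta hφ0]
      apply norm_cfcₙ_le
      intro t ht
      have hbd := hφbound t
      rw [Real.norm_eq_abs, abs_mul, abs_of_nonneg hbd.1]
      nlinarith [hbd.1, hbd.2]
    have h2 : ‖cfcₙ φ b * v‖ * ‖cfcₙ φ b * v‖ ≤ 1 := by
      rw [← CStarRing.norm_star_mul_self, hqq]
      exact hn
    nlinarith [norm_nonneg (cfcₙ φ b * v), h2]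
  · -- the cut-down transfer identity
    intro μ hμ
    set fμ : ℝ → ℝ := fun t => max (t - μ) 0 with hfμ_def
    have hfμc : Continuous fμ := by
      rw [hfμ_def]
      exact (continuous_id.sub continuous_const).max continuous_const
    have hfμ0 : fμ 0 = 0 := by
      simp only [hfμ_def]
      rw [max_eq_right (by linarith)]
    set z : M := cfcₙ fμ a with hz_def
    have hfixz : star v * v * z = z := by
      rw [hz_def]
      exact (hfix fμ hfμc.continuousOn hfμ0).1
    have hconjμ : cfcₙ fμ b = v * z * star v := by
      rw [hconj fμ hfμc.continuousOn hfμ0, ← hz_def]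
    have hzx : star v * (v * (z * x)) = z * x := by
      rw [← mul_assoc, ← mul_assoc, mul_assoc (star v * v) z x, ← mul_assoc, hfixz]
    have hfun : ∀ t ∈ quasispectrum ℝ a, φ t * (fμ t * φ t) = fμ t := by
      intro t ht
      rcases le_or_gt t μ with h | h
      · have hz0 : fμ t = 0 := by
          simp only [hfμ_def]
          rw [max_eq_right (by linarith)]
        rw [hz0, zero_mul, mul_zero]
      · rw [hφone t (le_trans hμ h.le), one_mul, mul_one]
    have m1 : cfcₙ (fun t => fμ t * φ t) a = z * x := by
      rw [cfcₙ_mul fμ φ a hfμc.continuousOn hfμ0 hφconta hφ0, ← hz_def, ← hx_def]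
    have m2 : cfcₙ (fun t => φ t * (fμ t * φ t)) a = x * (z * x) := by
      rw [cfcₙ_mul φ (fun t => fμ t * φ t) a hφconta hφ0 (hfμc.mul hφc).continuousOn
        (by show fμ 0 * φ 0 = 0; rw [hfμ0, zero_mul]), m1, ← hx_def]
    have hxzx : x * (z * x) = z := by
      rw [← m2, cfcₙ_congr (a := a) (g := fμ) hfun, ← hz_def]
    rw [hstarq, hconjμ, hq]
    simp only [mul_assoc]
    rw [hfixvx, hzx, hxzx]
end

section
/- Let A be a C*-algebra, n ≥ 2, and [a_{ij}] ∈ Mₙ(A) a positive matrix. Then for all i ≠ j the off-diagonal entry a_{ij} lies in the closed linear span of a_{ii} A a_{jj}, and moreover a_{ij} = lim_{k→∞} b_i^{(k)} a_{ij} b_j^{(k)} where b_j^{(k)} := (a_{jj} + 1/k)^{-1/2} a_{jj}^{1/2} (computed in the unitization). -/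
open Filter Unitization
open scoped CStarAlgebra

local notation "σₙ" => quasispectrum

section RealAux

/-- basic real inequality: `t/(t+ε) ≤ √((t+ε)⁻¹) * √t ≤ 1`. -/
lemma sqrt_frac_aux {t ε : ℝ} (ht : 0 ≤ t) (hε : 0 < ε) :
    t / (t + ε) ≤ Real.sqrt ((t + ε)⁻¹) * Real.sqrt t ∧
      Real.sqrt ((t + ε)⁻¹) * Real.sqrt t ≤ 1 := by
  have htε : 0 < t + ε := by linarith
  have h1 : Real.sqrt ((t + ε)⁻¹) * Real.sqrt t = Real.sqrt (t / (t + ε)) := by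
    rw [← Real.sqrt_mul (by positivity), inv_mul_eq_div]
  have hs0 : 0 ≤ t / (t + ε) := by positivity
  have hs1 : t / (t + ε) ≤ 1 := by
    rw [div_le_one htε]; linarith
  rw [h1]
  refine ⟨?_, Real.sqrt_le_one.mpr hs1⟩
  calc t / (t + ε) = Real.sqrt ((t / (t + ε)) ^ 2) := (Real.sqrt_sq hs0).symm
    _ ≤ Real.sqrt (t / (t + ε)) := Real.sqrt_le_sqrt (by nlinarith)

lemma key_real_bound {t ε : ℝ} (ht : 0 ≤ t) (hε : 0 < ε) :
    0 ≤ t * (1 - Real.sqrt ((t + ε)⁻¹) * Real.sqrt t) ^ 2 ∧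
      t * (1 - Real.sqrt ((t + ε)⁻¹) * Real.sqrt t) ^ 2 ≤ ε := by
  obtain ⟨hlo, hhi⟩ := sqrt_frac_aux ht hε
  have htε : 0 < t + ε := by linarith
  set f : ℝ := Real.sqrt ((t + ε)⁻¹) * Real.sqrt t with hf
  have hdiv : t / (t + ε) + ε / (t + ε) = 1 := by field_simp
  have h2 : 1 - f ≤ ε / (t + ε) := by linarith
  have h3 : 0 ≤ 1 - f := by linarith
  refine ⟨mul_nonneg ht (sq_nonneg _), ?_⟩
  calc t * (1 - f) ^ 2 ≤ t * (ε / (t + ε)) ^ 2 :=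
        mul_le_mul_of_nonneg_left (pow_le_pow_left₀ h3 h2 2) ht
    _ ≤ ε := by
        rw [div_pow, ← mul_div_assoc, div_le_iff₀ (by positivity)]
        nlinarith [sq_nonneg t, sq_nonneg ε, mul_nonneg ht hε.le]

end RealAux

section CStarAux

variable {A : Type*} [NonUnitalCStarAlgebra A] [PartialOrder A] [StarOrderedRing A]

/-- The basic norm estimate obtained by passing to the unitization. -/
lemma norm_sub_mul_sq_le {a b x : A} (ha : 0 ≤ a) (hb : IsSelfAdjoint b)
    (hx : star x * x ≤ a) :
    ‖x - x * b‖ ^ 2 ≤ ‖a - b * a - (a * b - b * (a * b))‖ := by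
  have hp : 0 ≤ star x * x := star_mul_self_nonneg x
  rw [← norm_inr (𝕜 := ℂ) (x - x * b), ← norm_inr (𝕜 := ℂ) (a - b * a - (a * b - b * (a * b)))]
  set u : A⁺¹ := 1 - (b : A⁺¹) with hu
  have hu_star : star u = u := by
    rw [hu, star_sub, star_one, ← inr_star, hb.star_eq]
  have h1 : ((x - x * b : A) : A⁺¹) = (x : A⁺¹) * u := by
    rw [inr_sub ℂ, inr_mul ℂ, hu, mul_sub, mul_one]
  rw [h1]
  have h2 : ‖(x : A⁺¹) * u‖ ^ 2 = ‖star u * ((star x * x : A) : A⁺¹) * u‖ := by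
    rw [sq, ← CStarRing.norm_star_mul_self]
    congr 1
    rw [star_mul, inr_mul ℂ, inr_star]
    simp only [mul_assoc]
  rw [h2]
  have h3 : star u * ((star x * x : A) : A⁺¹) * u ≤ star u * ((a : A) : A⁺¹) * u :=
    star_left_conjugate_le_conjugate
      ((inr_le_iff _ _ (IsSelfAdjoint.star_mul_self x) ha.isSelfAdjoint).mpr hx) u
  have h4 : 0 ≤ star u * ((star x * x : A) : A⁺¹) * u :=
    star_left_conjugate_nonneg (inr_nonneg_iff.mpr hp) u
  refine (CStarAlgebra.norm_le_norm_of_nonneg_of_le h4 h3).trans (le_of_eq ?_)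
  congr 1
  rw [hu_star, hu, inr_sub ℂ, inr_sub ℂ, inr_sub ℂ, inr_mul ℂ, inr_mul ℂ, inr_mul ℂ, inr_mul ℂ]
  noncomm_ring

lemma F_continuousOn {a : A} (ha : 0 ≤ a) {ε : ℝ} (hε : 0 < ε) :
    ContinuousOn (fun t : ℝ => Real.sqrt ((t + ε)⁻¹) * Real.sqrt t) (σₙ ℝ a) := by
  have hq : ∀ t ∈ σₙ ℝ a, (0 : ℝ) ≤ t := fun t ht => quasispectrum_nonneg_of_nonneg a ha t ht
  refine ContinuousOn.mul ?_ Real.continuous_sqrt.continuousOn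
  refine Real.continuous_sqrt.comp_continuousOn ?_
  refine ContinuousOn.inv₀ (by fun_prop) fun t ht => ?_
  have := hq t ht
  positivity

lemma F_zero {ε : ℝ} : Real.sqrt ((0 + ε)⁻¹) * Real.sqrt 0 = 0 := by
  simp [Real.sqrt_zero]

/-- The key norm estimate: `‖a - b a - (a b - b a b)‖ ≤ 1/k` for
`b = cfcₙ (fun t => √((t+1/k)⁻¹) √t) a`. -/
lemma norm_est {a : A} (ha : 0 ≤ a) {k : ℕ} (hk : 1 ≤ k) :
    ‖a - cfcₙ (fun t : ℝ => Real.sqrt ((t + (k : ℝ)⁻¹)⁻¹) * Real.sqrt t) a * a -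
        (a * cfcₙ (fun t : ℝ => Real.sqrt ((t + (k : ℝ)⁻¹)⁻¹) * Real.sqrt t) a -
          cfcₙ (fun t : ℝ => Real.sqrt ((t + (k : ℝ)⁻¹)⁻¹) * Real.sqrt t) a *
            (a * cfcₙ (fun t : ℝ => Real.sqrt ((t + (k : ℝ)⁻¹)⁻¹) * Real.sqrt t) a))‖ ≤
      (k : ℝ)⁻¹ := by
  have hkpos : (0 : ℝ) < (k : ℝ)⁻¹ := by
    have : (0 : ℝ) < (k : ℝ) := by exact_mod_cast hk
    positivity
  set F : ℝ → ℝ := fun t : ℝ => Real.sqrt ((t + (k : ℝ)⁻¹)⁻¹) * Real.sqrt t with hF_def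
  have hq : ∀ t ∈ σₙ ℝ a, (0 : ℝ) ≤ t := fun t ht => quasispectrum_nonneg_of_nonneg a ha t ht
  have hsa : IsSelfAdjoint a := ha.isSelfAdjoint
  have hF : ContinuousOn F (σₙ ℝ a) := F_continuousOn ha hkpos
  have hF0 : F 0 = 0 := F_zero
  have hid : ContinuousOn (fun t : ℝ => t) (σₙ ℝ a) := continuousOn_id
  have hFt : ContinuousOn (fun t : ℝ => F t * t) (σₙ ℝ a) := hF.mul hid
  have htF : ContinuousOn (fun t : ℝ => t * F t) (σₙ ℝ a) := hid.mul hF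
  have hFtF : ContinuousOn (fun t : ℝ => F t * (t * F t)) (σₙ ℝ a) := hF.mul htF
  have key : a - cfcₙ F a * a - (a * cfcₙ F a - cfcₙ F a * (a * cfcₙ F a)) =
      cfcₙ (fun t : ℝ => t - F t * t - (t * F t - F t * (t * F t))) a := by
    rw [cfcₙ_sub (fun t : ℝ => t - F t * t) (fun t : ℝ => t * F t - F t * (t * F t)) a
        (hid.sub hFt) (by simp [hF0]) (htF.sub hFtF) (by simp [hF0]),
      cfcₙ_sub (fun t : ℝ => t) (fun t : ℝ => F t * t) a hid rfl hFt (by simp [hF0]),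
      cfcₙ_sub (fun t : ℝ => t * F t) (fun t : ℝ => F t * (t * F t)) a htF (by simp [hF0])
        hFtF (by simp [hF0]),
      cfcₙ_mul F (fun t : ℝ => t) a hF hF0 hid rfl,
      cfcₙ_mul (fun t : ℝ => t) F a hid rfl hF hF0,
      cfcₙ_mul F (fun t : ℝ => t * F t) a hF hF0 htF (by simp [hF0]),
      cfcₙ_mul (fun t : ℝ => t) F a hid rfl hF hF0,
      cfcₙ_id' ℝ a hsa]
  rw [key]
  refine norm_cfcₙ_le fun t ht => ?_
  have ht0 := hq t ht
  obtain ⟨hb0, hb1⟩ := key_real_bound (ε := (k : ℝ)⁻¹) ht0 hkpos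
  have heq : t - F t * t - (t * F t - F t * (t * F t)) = t * (1 - F t) ^ 2 := by
    simp only [hF_def]; ring
  rw [Real.norm_eq_abs, heq, abs_of_nonneg hb0]
  exact hb1

/-- Convergence `x * bₖ → x` when `star x * x ≤ a`. -/
lemma tendsto_mul_cfcF {a x : A} (ha : 0 ≤ a) (hx : star x * x ≤ a) :
    Tendsto (fun k : ℕ =>
        x * cfcₙ (fun t : ℝ => Real.sqrt ((t + (k : ℝ)⁻¹)⁻¹) * Real.sqrt t) a)
      atTop (nhds x) := by
  rw [tendsto_iff_norm_sub_tendsto_zero]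
  have hb : Tendsto (fun k : ℕ => Real.sqrt ((k : ℝ)⁻¹)) atTop (nhds 0) := by
    have h0 : Tendsto (fun k : ℕ => ((k : ℝ))⁻¹) atTop (nhds 0) :=
      tendsto_inv_atTop_nhds_zero_nat
    exact (Real.continuous_sqrt.tendsto' 0 0 Real.sqrt_zero).comp h0
  refine squeeze_zero' (Eventually.of_forall fun k => norm_nonneg _) ?_ hb
  filter_upwards [eventually_ge_atTop 1] with k hk
  have hbsa : IsSelfAdjoint
      (cfcₙ (fun t : ℝ => Real.sqrt ((t + (k : ℝ)⁻¹)⁻¹) * Real.sqrt t) a) :=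
    cfcₙ_predicate _ a
  have h2 := norm_sub_mul_sq_le ha hbsa hx
  have h3 := norm_est ha hk
  rw [norm_sub_rev, Real.le_sqrt (norm_nonneg _) (by positivity)]
  exact h2.trans h3

/-- Factorization of `cfcₙ f a` as a limit of `a * z m = z m * a`. -/
lemma exists_seq_factor (a : A) (ha : 0 ≤ a) (f : ℝ → ℝ)
    (hf : ContinuousOn f (σₙ ℝ a)) (hf0 : f 0 = 0) (K : ℝ) (hK : 0 ≤ K)
    (hfb : ∀ t ∈ σₙ ℝ a, |f t| ≤ Real.sqrt (K * t)) :
    ∃ z : ℕ → A, Tendsto (fun m => a * z m) atTop (nhds (cfcₙ f a)) ∧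
      ∀ m, a * z m = z m * a := by
  have hq : ∀ t ∈ σₙ ℝ a, (0 : ℝ) ≤ t := fun t ht => quasispectrum_nonneg_of_nonneg a ha t ht
  have hsa : IsSelfAdjoint a := ha.isSelfAdjoint
  set g : ℕ → ℝ → ℝ := fun m t => (m : ℝ) ^ 2 * t / (1 + (m : ℝ) * t) ^ 2 * f t with hg_def
  have hden : ∀ (m : ℕ), ∀ t ∈ σₙ ℝ a, (0 : ℝ) < 1 + (m : ℝ) * t := by
    intro m t ht
    have h1 : (0 : ℝ) ≤ (m : ℝ) * t := mul_nonneg (Nat.cast_nonneg m) (hq t ht)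
    linarith
  have hgc : ∀ m : ℕ, ContinuousOn (g m) (σₙ ℝ a) := by
    intro m
    refine ContinuousOn.mul (ContinuousOn.div (by fun_prop) (by fun_prop) ?_) hf
    intro t ht
    exact pow_ne_zero 2 (hden m t ht).ne'
  have hg0 : ∀ m : ℕ, g m 0 = 0 := fun m => by simp [hg_def, hf0]
  set z : ℕ → A := fun m => cfcₙ (g m) a with hz_def
  have hid : ContinuousOn (fun t : ℝ => t) (σₙ ℝ a) := continuousOn_id
  have haz : ∀ m, a * z m = cfcₙ (fun t : ℝ => t * g m t) a := by
    intro m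
    conv_lhs => rw [← cfcₙ_id' ℝ a hsa]
    rw [cfcₙ_mul (fun t : ℝ => t) (g m) a hid rfl (hgc m) (hg0 m)]
  have hza : ∀ m, z m * a = cfcₙ (fun t : ℝ => g m t * t) a := by
    intro m
    conv_lhs => rw [← cfcₙ_id' ℝ a hsa]
    rw [cfcₙ_mul (g m) (fun t : ℝ => t) a (hgc m) (hg0 m) hid rfl]
  refine ⟨z, ?_, fun m => by
    rw [haz m, hza m]; exact cfcₙ_congr fun t _ => mul_comm _ _⟩
  rw [tendsto_iff_norm_sub_tendsto_zero]
  have hbnd : Tendsto (fun m : ℕ => Real.sqrt K * Real.sqrt ((m : ℝ)⁻¹)) atTop (nhds 0) := by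
    have h0 : Tendsto (fun m : ℕ => ((m : ℝ))⁻¹) atTop (nhds 0) :=
      tendsto_inv_atTop_nhds_zero_nat
    have h1 : Tendsto (fun m : ℕ => Real.sqrt ((m : ℝ)⁻¹)) atTop (nhds 0) :=
      (Real.continuous_sqrt.tendsto' 0 0 Real.sqrt_zero).comp h0
    simpa only [mul_zero] using h1.const_mul (Real.sqrt K)
  refine squeeze_zero' (Eventually.of_forall fun m => norm_nonneg _) ?_ hbnd
  filter_upwards [eventually_ge_atTop 1] with m hm
  have hmpos : (0 : ℝ) < (m : ℝ) := by exact_mod_cast hm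
  rw [haz m]
  have hsub : cfcₙ (fun t : ℝ => t * g m t) a - cfcₙ f a =
      cfcₙ (fun t : ℝ => t * g m t - f t) a := by
    rw [cfcₙ_sub (fun t : ℝ => t * g m t) f a (hid.mul (hgc m)) (by simp [hg0 m]) hf hf0]
  rw [hsub]
  refine norm_cfcₙ_le fun t ht => ?_
  have ht0 := hq t ht
  have hdent : (0 : ℝ) < 1 + (m : ℝ) * t := hden m t ht
  set e : ℝ := (m : ℝ) ^ 2 * t ^ 2 / (1 + (m : ℝ) * t) ^ 2 with he_def
  have hte : t * g m t = e * f t := by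
    rw [hg_def, he_def]; ring
  have he1 : e ≤ 1 := by
    rw [he_def, div_le_one (by positivity)]
    nlinarith [mul_nonneg (Nat.cast_nonneg m : (0:ℝ) ≤ m) ht0]
  have he0 : 0 ≤ e := by positivity
  have habs : |t * g m t - f t| = |f t| * (1 - e) := by
    rw [hte, show e * f t - f t = f t * (e - 1) by ring, abs_mul,
      show |e - 1| = 1 - e by rw [abs_of_nonpos (by linarith : e - 1 ≤ 0)]; ring]
  rw [Real.norm_eq_abs, habs]
  have h1 : |f t| * (1 - e) ≤ Real.sqrt (K * t) * (1 - e) :=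
    mul_le_mul_of_nonneg_right (hfb t ht) (by linarith)
  refine h1.trans ?_
  rw [Real.sqrt_mul hK, Real.sqrt_inv, mul_assoc]
  refine mul_le_mul_of_nonneg_left ?_ (Real.sqrt_nonneg K)
  -- goal : √t * (1 - e) ≤ (√m)⁻¹
  have hsm : (0 : ℝ) < Real.sqrt m := Real.sqrt_pos.mpr hmpos
  set r : ℝ := Real.sqrt ((m : ℝ) * t) with hr
  have hrn : 0 ≤ r := Real.sqrt_nonneg _
  have hr2 : r ^ 2 = (m : ℝ) * t := Real.sq_sqrt (by positivity)
  have hrmul : Real.sqrt (m : ℝ) * Real.sqrt t = r := (Real.sqrt_mul (Nat.cast_nonneg m) t).symm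
  have he_eq : e = ((m : ℝ) * t) ^ 2 / (1 + (m : ℝ) * t) ^ 2 := by
    rw [he_def, mul_pow]
  have key : r * (1 - e) ≤ 1 := by
    have h1me : 1 - e = (1 + 2 * ((m : ℝ) * t)) / (1 + (m : ℝ) * t) ^ 2 := by
      rw [he_eq]; field_simp; ring
    rw [h1me, ← hr2, ← mul_div_assoc, div_le_one (by positivity)]
    nlinarith [sq_nonneg (r ^ 2 - r), sq_nonneg (2 * r - 1)]
  rw [inv_eq_one_div, le_div_iff₀ hsm]
  calc Real.sqrt t * (1 - e) * Real.sqrt m = (Real.sqrt (m : ℝ) * Real.sqrt t) * (1 - e) := by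
        ring
    _ = r * (1 - e) := by rw [hrmul]
    _ ≤ 1 := key

end CStarAux

open Matrix Filter in
/-- If `[a i j]` is a positive `n × n` matrix over a C*-algebra `A` (i.e. of the form
`Cᴴ * C`), then each off-diagonal entry `a i j` lies in the closed linear span of
`a i i * A * a j j`, and `a i j = lim_k b i k * (a i j) * b j k` where
`b j k = (a j j + 1/k)^{-1/2} * (a j j)^{1/2}` is given by functional calculus. -/
theorem matrix_pos_offdiag {A : Type*} [NonUnitalCStarAlgebra A] [PartialOrder A]
    [StarOrderedRing A] {n : ℕ} (hn : 2 ≤ n) (M : Matrix (Fin n) (Fin n) A)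
    (hM : ∃ C : Matrix (Fin n) (Fin n) A, M = Cᴴ * C) (i j : Fin n) (hij : i ≠ j) :
    M i j ∈ closure (Submodule.span ℂ {x : A | ∃ y : A, x = M i i * y * M j j} : Set A) ∧
    Tendsto
      (fun k : ℕ =>
        cfcₙ (fun t : ℝ => Real.sqrt ((t + (k : ℝ)⁻¹)⁻¹) * Real.sqrt t) (M i i) * M i j *
          cfcₙ (fun t : ℝ => Real.sqrt ((t + (k : ℝ)⁻¹)⁻¹) * Real.sqrt t) (M j j))
      atTop (nhds (M i j)) := by
  obtain ⟨C, hC⟩ := hM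
  have hentry : ∀ p q : Fin n, M p q = ∑ l : Fin n, star (C l p) * C l q := by
    intro p q
    rw [hC]
    simp [Matrix.mul_apply, Matrix.conjTranspose_apply]
  have hpos : ∀ p : Fin n, 0 ≤ M p p := by
    intro p; rw [hentry p p]
    exact Finset.sum_nonneg fun l _ => star_mul_self_nonneg _
  have hle : ∀ (l : Fin n) (p : Fin n), star (C l p) * C l p ≤ M p p := by
    intro l p; rw [hentry p p]
    exact Finset.single_le_sum (f := fun l => star (C l p) * C l p)
      (fun l _ => star_mul_self_nonneg _) (Finset.mem_univ l)
  have h1 : ∀ l : Fin n, Tendsto (fun k : ℕ =>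
      C l j * cfcₙ (fun t : ℝ => Real.sqrt ((t + (k : ℝ)⁻¹)⁻¹) * Real.sqrt t) (M j j))
      atTop (nhds (C l j)) := fun l => tendsto_mul_cfcF (hpos j) (hle l j)
  have h2 : ∀ l : Fin n, Tendsto (fun k : ℕ =>
      cfcₙ (fun t : ℝ => Real.sqrt ((t + (k : ℝ)⁻¹)⁻¹) * Real.sqrt t) (M i i) * star (C l i))
      atTop (nhds (star (C l i))) := by
    intro l
    have h := (tendsto_mul_cfcF (hpos i) (hle l i)).star
    refine h.congr fun k => ?_
    rw [StarMul.star_mul,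
      (cfcₙ_predicate (fun t : ℝ => Real.sqrt ((t + (k : ℝ)⁻¹)⁻¹) * Real.sqrt t)
        (M i i) : IsSelfAdjoint _).star_eq]
  have part2 : Tendsto
      (fun k : ℕ =>
        cfcₙ (fun t : ℝ => Real.sqrt ((t + (k : ℝ)⁻¹)⁻¹) * Real.sqrt t) (M i i) * M i j *
          cfcₙ (fun t : ℝ => Real.sqrt ((t + (k : ℝ)⁻¹)⁻¹) * Real.sqrt t) (M j j))
      atTop (nhds (M i j)) := by
    have hsum : Tendsto (fun k : ℕ => ∑ l : Fin n,
        (cfcₙ (fun t : ℝ => Real.sqrt ((t + (k : ℝ)⁻¹)⁻¹) * Real.sqrt t) (M i i) *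
            star (C l i)) *
          (C l j * cfcₙ (fun t : ℝ => Real.sqrt ((t + (k : ℝ)⁻¹)⁻¹) * Real.sqrt t) (M j j)))
        atTop (nhds (∑ l : Fin n, star (C l i) * C l j)) :=
      tendsto_finset_sum _ fun l _ => (h2 l).mul (h1 l)
    rw [hentry i j]
    refine hsum.congr fun k => ?_
    rw [Finset.mul_sum, Finset.sum_mul]
    exact Finset.sum_congr rfl fun l _ => by simp only [mul_assoc]
  refine ⟨?_, part2⟩
  refine isClosed_closure.mem_of_tendsto part2 ?_
  filter_upwards [eventually_ge_atTop 1] with k hk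
  have hkpos : (0 : ℝ) < (k : ℝ)⁻¹ := by
    have : (0 : ℝ) < (k : ℝ) := by exact_mod_cast hk
    positivity
  have hKcast : (0 : ℝ) ≤ (k : ℝ) := Nat.cast_nonneg k
  have hfb : ∀ p : Fin n, ∀ t ∈ σₙ ℝ (M p p),
      |Real.sqrt ((t + (k : ℝ)⁻¹)⁻¹) * Real.sqrt t| ≤ Real.sqrt ((k : ℝ) * t) := by
    intro p t ht
    have ht0 : (0 : ℝ) ≤ t := quasispectrum_nonneg_of_nonneg _ (hpos p) t ht
    rw [abs_of_nonneg (mul_nonneg (Real.sqrt_nonneg _) (Real.sqrt_nonneg _)),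
      Real.sqrt_mul hKcast]
    refine mul_le_mul_of_nonneg_right ?_ (Real.sqrt_nonneg t)
    calc Real.sqrt ((t + (k : ℝ)⁻¹)⁻¹)
        ≤ Real.sqrt (((k : ℝ)⁻¹)⁻¹) :=
          Real.sqrt_le_sqrt (inv_anti₀ hkpos (by linarith))
      _ = Real.sqrt (k : ℝ) := by rw [inv_inv]
  obtain ⟨z, hz, hzc⟩ := exists_seq_factor (M i i) (hpos i) _
    (F_continuousOn (hpos i) hkpos) F_zero (k : ℝ) hKcast (hfb i)
  obtain ⟨w, hw, hwc⟩ := exists_seq_factor (M j j) (hpos j) _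
    (F_continuousOn (hpos j) hkpos) F_zero (k : ℝ) hKcast (hfb j)
  refine mem_closure_of_tendsto (b := (atTop : Filter ℕ))
    (f := fun m : ℕ => (M i i * z m) * M i j * (w m * M j j)) ?_ ?_
  · have hw' : Tendsto (fun m : ℕ => w m * M j j) atTop
        (nhds (cfcₙ (fun t : ℝ => Real.sqrt ((t + (k : ℝ)⁻¹)⁻¹) * Real.sqrt t) (M j j))) :=
      hw.congr fun m => hwc m
    exact (hz.mul tendsto_const_nhds).mul hw'
  · refine Eventually.of_forall fun m => ?_
    exact Submodule.subset_span ⟨z m * M i j * w m, by simp only [mul_assoc]⟩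
end

section
/- Let B be a C*-algebra, A ⊆ B a C*-subalgebra, and F ⊆ A₊. If F is a filling family for A and A₊ is a filling family for B, then F is a filling family for B. -/
namespace IsFillingInAux

open Filter Topology

noncomputable def ff (n : ℕ) : ℝ → ℝ := fun t => ((n : ℝ)+1)*t / (1+((n : ℝ)+1)*|t|)
noncomputable def gg (n : ℕ) : ℝ → ℝ := fun t => ((n : ℝ)+1)*Real.sqrt t / (1+((n : ℝ)+1)*|t|)

lemma denom_pos (n : ℕ) (t : ℝ) : 0 < 1+((n : ℝ)+1)*|t| := by positivity

lemma ff_cont (n : ℕ) : Continuous (ff n) := by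
  exact (continuous_const.mul continuous_id).div
    (continuous_const.add (continuous_const.mul continuous_abs))
    (fun t => (denom_pos n t).ne')

lemma gg_cont (n : ℕ) : Continuous (gg n) := by
  exact (continuous_const.mul Real.continuous_sqrt).div
    (continuous_const.add (continuous_const.mul continuous_abs))
    (fun t => (denom_pos n t).ne')

lemma ff_zero (n : ℕ) : ff n 0 = 0 := by simp [ff]

lemma gg_zero (n : ℕ) : gg n 0 = 0 := by simp [gg]

lemma abs_ff_le_one (n : ℕ) (t : ℝ) : |ff n t| ≤ 1 := by
  rw [ff, abs_div, abs_of_pos (denom_pos n t), div_le_one (denom_pos n t), abs_mul]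
  rw [abs_of_pos (show (0:ℝ) < (n:ℝ)+1 by positivity)]
  nlinarith [abs_nonneg t, Nat.cast_nonneg (α := ℝ) n]

lemma key1 (n : ℕ) {t : ℝ} (ht : 0 ≤ t) : |t - ff n t * t| ≤ 1/((n : ℝ)+1) := by
  have hν : (0:ℝ) < (n:ℝ)+1 := by positivity
  rw [ff, abs_of_nonneg ht]
  have hd : (0:ℝ) < 1+((n : ℝ)+1)*t := by positivity
  have : t - ((n : ℝ)+1)*t / (1+((n : ℝ)+1)*t) * t = t / (1+((n : ℝ)+1)*t) := by
    field_simp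
    ring
  rw [this, abs_of_nonneg (by positivity), div_le_div_iff₀ hd hν]
  nlinarith

lemma key2 (n m : ℕ) {t : ℝ} (ht : 0 ≤ t) :
    |ff m t - ff n t * ff m t| ≤ ((m : ℝ)+1)/((n : ℝ)+1) := by
  have hν : (0:ℝ) < (n:ℝ)+1 := by positivity
  have hμ : (0:ℝ) < (m:ℝ)+1 := by positivity
  rw [ff, ff, abs_of_nonneg ht]
  have hdn : (0:ℝ) < 1+((n : ℝ)+1)*t := by positivity
  have hdm : (0:ℝ) < 1+((m : ℝ)+1)*t := by positivity
  have : ((m : ℝ)+1)*t / (1+((m : ℝ)+1)*t) - ((n : ℝ)+1)*t / (1+((n : ℝ)+1)*t) *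
      (((m : ℝ)+1)*t / (1+((m : ℝ)+1)*t)) = ((m : ℝ)+1)*t / ((1+((m : ℝ)+1)*t) * (1+((n : ℝ)+1)*t)) := by
    field_simp
    ring
  rw [this, abs_of_nonneg (by positivity), div_le_div_iff₀ (by positivity) hν]
  nlinarith [mul_nonneg hμ.le ht, mul_nonneg (mul_nonneg hμ.le hμ.le) ht,
    mul_nonneg (mul_nonneg (mul_nonneg hμ.le hμ.le) hν.le) (mul_nonneg ht ht)]

lemma key3 (n m : ℕ) {t : ℝ} (ht : 0 ≤ t) :
    gg n t * (t * gg m t) = ff n t * ff m t := by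
  have hs := Real.mul_self_sqrt ht
  rw [gg, gg, ff, ff, abs_of_nonneg ht]
  have hdn : (0:ℝ) < 1+((n : ℝ)+1)*t := by positivity
  have hdm : (0:ℝ) < 1+((m : ℝ)+1)*t := by positivity
  field_simp
  linear_combination t*hs

lemma key4 (n : ℕ) {t : ℝ} (ht : 0 ≤ t) :
    gg n t * gg n t ≤ (((n : ℝ)+1)^2) * t := by
  have hs := Real.mul_self_sqrt ht
  rw [gg, abs_of_nonneg ht]
  have hdn : (0:ℝ) < 1+((n : ℝ)+1)*t := by positivity
  rw [div_mul_div_comm, div_le_iff₀ (by positivity)]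
  have h2 : ((n : ℝ)+1)*Real.sqrt t * (((n : ℝ)+1)*Real.sqrt t) = ((n : ℝ)+1)^2 * t := by
    linear_combination (((n:ℝ)+1)^2)*hs
  rw [h2]
  nlinarith [mul_nonneg (mul_nonneg (sq_nonneg ((n:ℝ)+1)) ht)
    (mul_nonneg (by positivity : (0:ℝ) ≤ ((n:ℝ)+1)*t) (by positivity : (0:ℝ) ≤ 2 + ((n:ℝ)+1)*t))]

lemma tendsto_inv_nat : Tendsto (fun n : ℕ => 1/((n : ℝ)+1)) atTop (𝓝 0) :=
  tendsto_one_div_add_atTop_nhds_zero_nat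

lemma tendsto_const_div_nat (C : ℝ) : Tendsto (fun n : ℕ => C/((n : ℝ)+1)) atTop (𝓝 0) := by
  have := tendsto_inv_nat.const_mul C
  simpa [mul_one_div, div_eq_mul_inv] using this


section CStar

variable {B : Type*} [NonUnitalCStarAlgebra B] [PartialOrder B] [StarOrderedRing B]

noncomputable def en (a : B) (n : ℕ) : B := cfcₙ (ff n) a
noncomputable def cn (a : B) (n : ℕ) : B := cfcₙ (gg n) a

lemma en_sa (a : B) (n : ℕ) : IsSelfAdjoint (en a n) := cfcₙ_predicate _ a

lemma cn_sa (a : B) (n : ℕ) : IsSelfAdjoint (cn a n) := cfcₙ_predicate _ a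

lemma norm_en_le_one (a : B) (n : ℕ) : ‖en a n‖ ≤ 1 :=
  norm_cfcₙ_le (fun t _ => by rw [Real.norm_eq_abs]; exact abs_ff_le_one n t)

variable {a : B} (ha : 0 ≤ a)

include ha

lemma spec_nonneg : ∀ t ∈ quasispectrum ℝ a, 0 ≤ t :=
  quasispectrum_nonneg_of_nonneg a ha

lemma en_mul_en (n m : ℕ) :
    en a n * en a m = cfcₙ (fun t => ff n t * ff m t) a :=
  (cfcₙ_mul (ff n) (ff m) a ((ff_cont n).continuousOn) (ff_zero n)
    ((ff_cont m).continuousOn) (ff_zero m)).symm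

lemma norm_a_sub_en_mul_a (n : ℕ) : ‖a - en a n * a‖ ≤ 1/((n : ℝ)+1) := by
  have ha' : IsSelfAdjoint a := .of_nonneg ha
  have h1 : cfcₙ (fun t => ff n t * t) a = en a n * a := by
    have h := cfcₙ_mul (ff n) (fun x : ℝ => x) a ((ff_cont n).continuousOn) (ff_zero n)
      continuous_id.continuousOn rfl
    rw [cfcₙ_id' ℝ a ha'] at h
    exact h
  have h2 : cfcₙ (fun t => t - ff n t * t) a = a - en a n * a := by
    have h := cfcₙ_sub (fun x : ℝ => x) (fun t => ff n t * t) a continuous_id.continuousOn rfl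
      (((ff_cont n).mul continuous_id).continuousOn) (by simp [ff_zero])
    rw [cfcₙ_id' ℝ a ha', h1] at h
    exact h
  rw [← h2]
  exact norm_cfcₙ_le (fun t htt => by
    rw [Real.norm_eq_abs]; exact key1 n (spec_nonneg ha t htt))

lemma norm_en_sub_en_mul_en (n m : ℕ) :
    ‖en a m - en a n * en a m‖ ≤ ((m : ℝ)+1)/((n : ℝ)+1) := by
  have h2 : en a m - en a n * en a m = cfcₙ (fun t => ff m t - ff n t * ff m t) a := by
    rw [en_mul_en ha, en]
    exact (cfcₙ_sub (ff m) (fun t => ff n t * ff m t) a ((ff_cont m).continuousOn) (ff_zero m)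
      (((ff_cont n).mul (ff_cont m)).continuousOn) (by simp [ff_zero])).symm
  rw [h2]
  exact norm_cfcₙ_le (fun t htt => by
    rw [Real.norm_eq_abs]; exact key2 n m (spec_nonneg ha t htt))

lemma cn_mul_a_mul_cn (n m : ℕ) :
    cn a n * (a * cn a m) = en a n * en a m := by
  have ha' : IsSelfAdjoint a := .of_nonneg ha
  have h1 : cfcₙ (fun t => t * gg m t) a = a * cn a m := by
    have h := cfcₙ_mul (fun x : ℝ => x) (gg m) a continuous_id.continuousOn rfl
      ((gg_cont m).continuousOn) (gg_zero m)
    rw [cfcₙ_id' ℝ a ha'] at h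
    exact h
  have h2 : cfcₙ (fun t => gg n t * (t * gg m t)) a = cn a n * (a * cn a m) := by
    have h := cfcₙ_mul (gg n) (fun t => t * gg m t) a ((gg_cont n).continuousOn) (gg_zero n)
      ((continuous_id.mul (gg_cont m)).continuousOn) (by simp [gg_zero])
    rw [h1] at h
    exact h
  rw [← h2, en_mul_en ha]
  exact cfcₙ_congr (fun t htt => key3 n m (spec_nonneg ha t htt))

lemma cn_mul_cn_le (n : ℕ) :
    cn a n * cn a n ≤ (((n : ℝ)+1)^2) • a := by
  have ha' : IsSelfAdjoint a := .of_nonneg ha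
  have h1 : cn a n * cn a n = cfcₙ (fun t => gg n t * gg n t) a :=
    (cfcₙ_mul (gg n) (gg n) a ((gg_cont n).continuousOn) (gg_zero n)
      ((gg_cont n).continuousOn) (gg_zero n)).symm
  have h2 : (((n : ℝ)+1)^2) • a = cfcₙ (fun t : ℝ => (((n : ℝ)+1)^2) * t) a :=
    (cfcₙ_const_mul_id _ a ha').symm
  rw [h1, h2]
  exact cfcₙ_mono (fun t htt => key4 n (spec_nonneg ha t htt))
    (((gg_cont n).mul (gg_cont n)).continuousOn)
    ((continuous_const.mul continuous_id).continuousOn)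
    (by simp [gg_zero]) (by simp)


omit ha

lemma norm_en_mul_le (n : ℕ) (y : B) : ‖en a n * y‖ ≤ ‖y‖ :=
  (norm_mul_le _ _).trans (mul_le_of_le_one_left (norm_nonneg y) (norm_en_le_one a n))

lemma norm_mul_en_le (n : ℕ) (y : B) : ‖y * en a n‖ ≤ ‖y‖ :=
  (norm_mul_le _ _).trans (mul_le_of_le_one_right (norm_nonneg y) (norm_en_le_one a n))

lemma tendsto_of_norm_sub_le {f : ℕ → B} {x : B} {g : ℕ → ℝ}
    (h : ∀ n, ‖f n - x‖ ≤ g n) (hg : Tendsto g atTop (𝓝 0)) :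
    Tendsto f atTop (𝓝 x) :=
  tendsto_sub_nhds_zero_iff.mp (squeeze_zero_norm h hg)

lemma norm_sub_tendsto {f : ℕ → B} {x : B} (h : Tendsto f atTop (𝓝 x)) :
    Tendsto (fun n => ‖f n - x‖) atTop (𝓝 0) := by
  have := (tendsto_sub_nhds_zero_iff.mpr h).norm
  simpa using this

lemma tendsto_conj {x : B} (h1 : Tendsto (fun n => en a n * x) atTop (𝓝 x))
    (h2 : Tendsto (fun n => x * en a n) atTop (𝓝 x)) :
    Tendsto (fun n => en a n * x * en a n) atTop (𝓝 x) := by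
  apply tendsto_of_norm_sub_le (g := fun n => ‖en a n * x - x‖ + ‖x * en a n - x‖)
  · intro n
    have hid : en a n * x * en a n - x = (en a n * x - x) * en a n + (x * en a n - x) := by
      noncomm_ring
    rw [hid]
    exact (norm_add_le _ _).trans
      (add_le_add ((norm_mul_en_le n _)) le_rfl)
  · simpa using (norm_sub_tendsto h1).add (norm_sub_tendsto h2)

include ha

lemma tendsto_en_mul_a : Tendsto (fun n => en a n * a) atTop (𝓝 a) := by
  apply tendsto_of_norm_sub_le (g := fun n => 1/((n : ℝ)+1)) _ tendsto_inv_nat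
  intro n
  rw [← norm_neg]
  simpa using norm_a_sub_en_mul_a ha n

lemma tendsto_a_mul_en : Tendsto (fun n => a * en a n) atTop (𝓝 a) := by
  have ha' : IsSelfAdjoint a := .of_nonneg ha
  have h := (tendsto_en_mul_a ha).star
  rw [ha'.star_eq] at h
  convert h using 2 with n
  rw [star_mul, ha'.star_eq, (en_sa a n).star_eq]

lemma tendsto_en_a_en : Tendsto (fun n => en a n * a * en a n) atTop (𝓝 a) :=
  tendsto_conj (tendsto_en_mul_a ha) (tendsto_a_mul_en ha)

lemma left_tendsto {x : B} (hx : Tendsto (fun n => en a n * x * en a n) atTop (𝓝 x)) :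
    Tendsto (fun n => en a n * x) atTop (𝓝 x) := by
  rw [Metric.tendsto_atTop] at hx ⊢
  intro ε hε
  obtain ⟨k, hk⟩ := hx (ε/3) (by linarith)
  have hk' : ‖x - en a k * x * en a k‖ < ε/3 := by
    rw [← dist_eq_norm, dist_comm]
    exact hk k le_rfl
  set C := ‖x * en a k‖ with hC
  have hC0 : 0 ≤ C := norm_nonneg _
  obtain ⟨N, hN⟩ := exists_nat_gt (3 * (((k : ℝ)+1) * C) / ε)
  refine ⟨N, fun n hn => ?_⟩
  have hid : en a n * x - x = en a n * (x - en a k * x * en a k)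
      + (en a n * en a k - en a k) * (x * en a k) + (en a k * x * en a k - x) := by
    noncomm_ring
  have hb1 : ‖en a n * (x - en a k * x * en a k)‖ < ε/3 :=
    lt_of_le_of_lt (norm_en_mul_le n _) hk'
  have hb2 : ‖(en a n * en a k - en a k) * (x * en a k)‖ < ε/3 := by
    have h1 : ‖en a n * en a k - en a k‖ ≤ ((k : ℝ)+1)/((n : ℝ)+1) := by
      rw [← norm_neg]
      simpa using norm_en_sub_en_mul_en ha n k
    have hnN : (N : ℝ) ≤ (n : ℝ) := Nat.cast_le.mpr hn
    have h3 : 3 * (((k : ℝ)+1) * C) < ε * ((n : ℝ)+1) := by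
      have := (div_lt_iff₀ hε).mp hN
      nlinarith
    calc ‖(en a n * en a k - en a k) * (x * en a k)‖
        ≤ ‖en a n * en a k - en a k‖ * C := norm_mul_le _ _
      _ ≤ ((k : ℝ)+1)/((n : ℝ)+1) * C := by
          apply mul_le_mul_of_nonneg_right h1 hC0
      _ < ε/3 := by
          rw [div_mul_eq_mul_div, div_lt_iff₀ (by positivity)]
          nlinarith
  have hb3 : ‖en a k * x * en a k - x‖ < ε/3 := by
    rw [← dist_eq_norm]
    exact hk k le_rfl
  rw [dist_eq_norm, hid]
  calc ‖en a n * (x - en a k * x * en a k) + (en a n * en a k - en a k) * (x * en a k)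
        + (en a k * x * en a k - x)‖
      ≤ ‖en a n * (x - en a k * x * en a k) + (en a n * en a k - en a k) * (x * en a k)‖
        + ‖en a k * x * en a k - x‖ := norm_add_le _ _
    _ ≤ ‖en a n * (x - en a k * x * en a k)‖ + ‖(en a n * en a k - en a k) * (x * en a k)‖
        + ‖en a k * x * en a k - x‖ := by gcongr; exact norm_add_le _ _
    _ < ε/3 + ε/3 + ε/3 := by gcongr
    _ = ε := by ring

lemma right_tendsto {x : B} (hx : Tendsto (fun n => en a n * x * en a n) atTop (𝓝 x)) :
    Tendsto (fun n => x * en a n) atTop (𝓝 x) := by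
  have hxs : Tendsto (fun n => en a n * star x * en a n) atTop (𝓝 (star x)) := by
    have h := hx.star
    convert h using 2 with n
    simp only [star_mul, (en_sa a n).star_eq]
    rw [mul_assoc]
  have h := (left_tendsto ha hxs).star
  rw [star_star] at h
  convert h using 2 with n
  rw [star_mul, star_star, (en_sa a n).star_eq]


omit ha in
lemma tendsto_of_sq_norm_le {f : ℕ → B} {x : B} {g : ℕ → ℝ}
    (h : ∀ n, ‖f n - x‖^2 ≤ g n) (hg : Tendsto g atTop (𝓝 0)) :
    Tendsto f atTop (𝓝 x) := by
  have h0 : Tendsto (fun n => ‖f n - x‖^2) atTop (𝓝 0) :=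
    squeeze_zero (fun n => by positivity) h hg
  have h0' := (Real.continuous_sqrt.tendsto 0).comp h0
  rw [Real.sqrt_zero] at h0'
  have heq : Real.sqrt ∘ (fun n => ‖f n - x‖^2) = fun n => ‖f n - x‖ :=
    funext fun n => Real.sqrt_sq (norm_nonneg _)
  rw [heq] at h0'
  exact tendsto_of_norm_sub_le (fun n => le_rfl) h0'

lemma her {x d : B} (hx : 0 ≤ x) (hxd : x ≤ d)
    (hd : Tendsto (fun n => en a n * d * en a n) atTop (𝓝 d)) :
    Tendsto (fun n => en a n * x * en a n) atTop (𝓝 x) := by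
  have hdl := left_tendsto ha hd
  have hdr := right_tendsto ha hd
  have hq_d : Tendsto (fun n => d - en a n * d - d * en a n + en a n * d * en a n)
      atTop (𝓝 0) := by
    have h := (((tendsto_const_nhds (x := d) (f := atTop)).sub hdl).sub hdr).add hd
    simpa using h
  set s := CFC.sqrt x with hs_def
  have hs0 : 0 ≤ s := CFC.sqrt_nonneg _
  have hss : s * s = x := CFC.sqrt_mul_sqrt_self x hx
  have hssa : IsSelfAdjoint s := .of_nonneg hs0
  have hdx : 0 ≤ d - x := sub_nonneg.mpr hxd
  set r := CFC.sqrt (d - x) with hr_def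
  have hr0 : 0 ≤ r := CFC.sqrt_nonneg _
  have hrr : r * r = d - x := CFC.sqrt_mul_sqrt_self _ hdx
  have hrsa : IsSelfAdjoint r := .of_nonneg hr0
  have hqx : ∀ n, x - en a n * x - x * en a n + en a n * x * en a n
      = star (s - s * en a n) * (s - s * en a n) := by
    intro n
    rw [star_sub, star_mul, hssa.star_eq, (en_sa a n).star_eq]
    have hexp : (s - en a n * s) * (s - s * en a n)
        = s * s - en a n * (s * s) - (s * s) * en a n + en a n * (s * s) * en a n := by
      noncomm_ring
    rw [hss] at hexp
    rw [hexp]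
  have hqd_qx : ∀ n, (d - en a n * d - d * en a n + en a n * d * en a n)
      - (x - en a n * x - x * en a n + en a n * x * en a n)
      = star (r - r * en a n) * (r - r * en a n) := by
    intro n
    rw [star_sub, star_mul, hrsa.star_eq, (en_sa a n).star_eq]
    have hexp : (r - en a n * r) * (r - r * en a n)
        = r * r - en a n * (r * r) - (r * r) * en a n + en a n * (r * r) * en a n := by
      noncomm_ring
    rw [hrr] at hexp
    rw [hexp]
    noncomm_ring
  have hnorm : ∀ n, ‖s - s * en a n‖^2
      ≤ ‖d - en a n * d - d * en a n + en a n * d * en a n‖ := by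
    intro n
    have h1 : ‖s - s * en a n‖^2
        = ‖x - en a n * x - x * en a n + en a n * x * en a n‖ := by
      rw [hqx n, CStarRing.norm_star_mul_self, sq]
    rw [h1]
    refine CStarAlgebra.norm_le_norm_of_nonneg_of_le ?_ ?_
    · rw [hqx n]; exact star_mul_self_nonneg _
    · have h2 : 0 ≤ (d - en a n * d - d * en a n + en a n * d * en a n)
          - (x - en a n * x - x * en a n + en a n * x * en a n) := by
        rw [hqd_qx n]; exact star_mul_self_nonneg _
      exact sub_nonneg.mp h2
  have hsen : Tendsto (fun n => s * en a n) atTop (𝓝 s) := by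
    have hqd0 : Tendsto (fun n => ‖d - en a n * d - d * en a n + en a n * d * en a n‖)
        atTop (𝓝 0) := by
      have h := norm_sub_tendsto hq_d
      simpa using h
    have h0 : Tendsto (fun n => ‖s - s * en a n‖^2) atTop (𝓝 0) :=
      squeeze_zero (fun n => by positivity) hnorm hqd0
    have h0' := (Real.continuous_sqrt.tendsto 0).comp h0
    rw [Real.sqrt_zero] at h0'
    have heq : Real.sqrt ∘ (fun n => ‖s - s * en a n‖^2) = fun n => ‖s - s * en a n‖ :=
      funext fun n => Real.sqrt_sq (norm_nonneg _)
    rw [heq] at h0'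
    apply tendsto_of_norm_sub_le (g := fun n => ‖s - s * en a n‖) _ h0'
    intro n
    rw [norm_sub_rev]
  have hxe : Tendsto (fun n => x * en a n) atTop (𝓝 x) := by
    have h := hsen.const_mul s
    rw [hss] at h
    convert h using 2 with n
    rw [← hss, mul_assoc]
  have hex : Tendsto (fun n => en a n * x) atTop (𝓝 x) := by
    have hxsa : IsSelfAdjoint x := .of_nonneg hx
    have h := hxe.star
    rw [hxsa.star_eq] at h
    convert h using 2 with n
    rw [star_mul, hxsa.star_eq, (en_sa a n).star_eq]
  exact tendsto_conj hex hxe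

omit ha in
lemma H_isClosed (a : B) :
    IsClosed {x : B | Tendsto (fun n => en a n * x * en a n) atTop (𝓝 x)} := by
  apply IsSeqClosed.isClosed
  intro xs x hmem hxs
  rw [Set.mem_setOf_eq, Metric.tendsto_atTop]
  intro ε hε
  obtain ⟨k, hk⟩ : ∃ k, dist (xs k) x < ε/3 := by
    obtain ⟨N, hN⟩ := (Metric.tendsto_atTop.mp hxs) (ε/3) (by linarith)
    exact ⟨N, hN N le_rfl⟩
  obtain ⟨N, hN⟩ := Metric.tendsto_atTop.mp (hmem k) (ε/3) (by linarith)
  refine ⟨N, fun n hn => ?_⟩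
  have hid : en a n * x * en a n - x = en a n * (x - xs k) * en a n
      + (en a n * xs k * en a n - xs k) + (xs k - x) := by noncomm_ring
  rw [dist_eq_norm, hid]
  have b1 : ‖en a n * (x - xs k) * en a n‖ < ε/3 := by
    refine lt_of_le_of_lt ((norm_mul_en_le n _).trans (norm_en_mul_le n _)) ?_
    rw [← dist_eq_norm, dist_comm]
    exact hk
  have b2 : ‖en a n * xs k * en a n - xs k‖ < ε/3 := by
    rw [← dist_eq_norm]; exact hN n hn
  have b3 : ‖xs k - x‖ < ε/3 := by rw [← dist_eq_norm]; exact hk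
  calc ‖en a n * (x - xs k) * en a n + (en a n * xs k * en a n - xs k) + (xs k - x)‖
      ≤ ‖en a n * (x - xs k) * en a n + (en a n * xs k * en a n - xs k)‖ + ‖xs k - x‖ :=
        norm_add_le _ _
    _ ≤ ‖en a n * (x - xs k) * en a n‖ + ‖en a n * xs k * en a n - xs k‖ + ‖xs k - x‖ := by
        gcongr; exact norm_add_le _ _
    _ < ε/3 + ε/3 + ε/3 := by gcongr
    _ = ε := by ring

end CStar

end IsFillingInAux


open IsFillingInAux Filter Topology

variable {B : Type*} [NonUnitalCStarAlgebra B] [PartialOrder B] [StarOrderedRing B]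

/-- `F` is a filling family for the C*-algebra given by the subset `S ⊆ B`
(with operations inherited from `B`): for every hereditary C*-subalgebra `D` of `S`
and every closed two-sided ideal `I` of `S` with `D ⊄ I`, there is `z ∈ S` with
`star z * z ∈ D`, `z * star z ∈ F` and `z * star z ∉ I`. -/
def IsFillingIn (S F : Set B) : Prop :=
  ∀ D : Set B, D ⊆ S → (0 : B) ∈ D →
    (∀ x ∈ D, ∀ y ∈ D, x + y ∈ D) →
    (∀ (c : ℂ), ∀ x ∈ D, c • x ∈ D) →
    (∀ x ∈ D, ∀ y ∈ D, x * y ∈ D) →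
    (∀ x ∈ D, star x ∈ D) →
    IsClosed D →
    (∀ a ∈ S, ∀ d ∈ D, 0 ≤ a → a ≤ d → a ∈ D) →
  ∀ I : Set B, I ⊆ S → (0 : B) ∈ I →
    (∀ x ∈ I, ∀ y ∈ I, x + y ∈ I) →
    (∀ (c : ℂ), ∀ x ∈ I, c • x ∈ I) →
    (∀ a ∈ S, ∀ x ∈ I, a * x ∈ I) →
    (∀ a ∈ S, ∀ x ∈ I, x * a ∈ I) →
    IsClosed I →
  ¬ D ⊆ I →
  ∃ z ∈ S, star z * z ∈ D ∧ z * star z ∈ F ∧ z * star z ∉ I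

/-- If `A` is a (closed) C*-subalgebra of `B`, `F ⊆ A₊` is a filling family for `A`,
and `A₊` is a filling family for `B`, then `F` is a filling family for `B`. -/
theorem isFillingIn_trans (A : NonUnitalStarSubalgebra ℂ B) (hA : IsClosed (A : Set B))
    (F : Set B) (hFA : F ⊆ (A : Set B)) (hFpos : ∀ f ∈ F, (0 : B) ≤ f)
    (hF : IsFillingIn (A : Set B) F)
    (hApos : IsFillingIn (Set.univ : Set B) {a : B | a ∈ A ∧ 0 ≤ a}) :
    IsFillingIn (Set.univ : Set B) F := by
  intro D _ hD0 hDadd hDsmul hDmul hDstar hDclosed hDher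
    I _ hI0 hIadd hIsmul hIl hIr hIclosed hDI
  obtain ⟨z, -, hz1, hz2, hz3⟩ :=
    hApos D (Set.subset_univ D) hD0 hDadd hDsmul hDmul hDstar hDclosed hDher
      I (Set.subset_univ I) hI0 hIadd hIsmul hIl hIr hIclosed hDI
  obtain ⟨haA, ha⟩ := hz2
  set a := z * star z with ha_def
  -- the "approximately invariant" hereditary subalgebra of A
  set Hs : Set B := {x : B | x ∈ (A : Set B) ∧
      Tendsto (fun n => en a n * x * en a n) atTop (𝓝 x)} with hHs_def
  -- the family of closed hereditary *-subalgebras of A containing a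
  set P : Set B → Prop := fun D' => D' ⊆ (A : Set B) ∧ (0 : B) ∈ D' ∧
      (∀ x ∈ D', ∀ y ∈ D', x + y ∈ D') ∧ (∀ (c : ℂ), ∀ x ∈ D', c • x ∈ D') ∧
      (∀ x ∈ D', ∀ y ∈ D', x * y ∈ D') ∧ (∀ x ∈ D', star x ∈ D') ∧
      IsClosed D' ∧ (∀ b ∈ (A : Set B), ∀ d ∈ D', 0 ≤ b → b ≤ d → b ∈ D') ∧ a ∈ D' with hP_def
  set D₀ : Set B := ⋂₀ {D' | P D'} with hD₀_def
  have hPA : P (A : Set B) :=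
    ⟨subset_rfl, zero_mem _, fun x hx y hy => add_mem hx hy,
      fun c x hx => SMulMemClass.smul_mem c hx, fun x hx y hy => mul_mem hx hy,
      fun x hx => star_mem hx, hA, fun b hb _ _ _ _ => hb, haA⟩
  have hPH : P Hs := by
    refine ⟨fun x hx => hx.1, ⟨zero_mem _, ?_⟩, ?_, ?_, ?_, ?_, ?_, ?_, ⟨haA, tendsto_en_a_en ha⟩⟩
    · have h : (fun n => en a n * 0 * en a n) = fun _ : ℕ => (0 : B) := by
        funext n; simp
      rw [h]; exact tendsto_const_nhds
    · rintro x ⟨hxA, hx⟩ y ⟨hyA, hy⟩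
      refine ⟨add_mem hxA hyA, ?_⟩
      have h := hx.add hy
      convert h using 2 with n
      noncomm_ring
    · rintro c x ⟨hxA, hx⟩
      refine ⟨SMulMemClass.smul_mem c hxA, ?_⟩
      have h := hx.const_smul c
      convert h using 2 with n
      rw [mul_smul_comm, smul_mul_assoc]
    · rintro x ⟨hxA, hx⟩ y ⟨hyA, hy⟩
      refine ⟨mul_mem hxA hyA, ?_⟩
      have h := (left_tendsto ha hx).mul (right_tendsto ha hy)
      convert h using 2 with n
      noncomm_ring
    · rintro x ⟨hxA, hx⟩
      refine ⟨star_mem hxA, ?_⟩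
      have h := hx.star
      convert h using 2 with n
      simp [star_mul, (en_sa a n).star_eq, mul_assoc]
    · exact hA.inter (H_isClosed a)
    · rintro b hbA d ⟨hdA, hd⟩ h0 hle
      exact ⟨hbA, her ha h0 hle hd⟩
  -- properties of D₀
  have hD₀A : D₀ ⊆ (A : Set B) := Set.sInter_subset_of_mem hPA
  have hD₀0 : (0 : B) ∈ D₀ := Set.mem_sInter.mpr fun D' hD' => (hD' : P D').2.1
  have hD₀add : ∀ x ∈ D₀, ∀ y ∈ D₀, x + y ∈ D₀ := fun x hx y hy =>
    Set.mem_sInter.mpr fun D' hD' => (hD' : P D').2.2.1 x (Set.mem_sInter.mp hx D' hD')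
      y (Set.mem_sInter.mp hy D' hD')
  have hD₀smul : ∀ (c : ℂ), ∀ x ∈ D₀, c • x ∈ D₀ := fun c x hx =>
    Set.mem_sInter.mpr fun D' hD' => (hD' : P D').2.2.2.1 c x (Set.mem_sInter.mp hx D' hD')
  have hD₀mul : ∀ x ∈ D₀, ∀ y ∈ D₀, x * y ∈ D₀ := fun x hx y hy =>
    Set.mem_sInter.mpr fun D' hD' => (hD' : P D').2.2.2.2.1 x (Set.mem_sInter.mp hx D' hD')
      y (Set.mem_sInter.mp hy D' hD')
  have hD₀star : ∀ x ∈ D₀, star x ∈ D₀ := fun x hx =>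
    Set.mem_sInter.mpr fun D' hD' => (hD' : P D').2.2.2.2.2.1 x (Set.mem_sInter.mp hx D' hD')
  have hD₀closed : IsClosed D₀ :=
    isClosed_sInter fun D' hD' => (hD' : P D').2.2.2.2.2.2.1
  have hD₀her : ∀ b ∈ (A : Set B), ∀ d ∈ D₀, 0 ≤ b → b ≤ d → b ∈ D₀ := fun b hb d hd h0 hle =>
    Set.mem_sInter.mpr fun D' hD' => (hD' : P D').2.2.2.2.2.2.2.1 b hb d
      (Set.mem_sInter.mp hd D' hD') h0 hle
  have haD₀ : a ∈ D₀ := Set.mem_sInter.mpr fun D' hD' => (hD' : P D').2.2.2.2.2.2.2.2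
  -- the ideal A ∩ I
  set I₀ : Set B := (A : Set B) ∩ I with hI₀_def
  have hI₀A : I₀ ⊆ (A : Set B) := Set.inter_subset_left
  have hI₀0 : (0 : B) ∈ I₀ := ⟨zero_mem _, hI0⟩
  have hI₀add : ∀ x ∈ I₀, ∀ y ∈ I₀, x + y ∈ I₀ := fun x hx y hy =>
    ⟨add_mem hx.1 hy.1, hIadd x hx.2 y hy.2⟩
  have hI₀smul : ∀ (c : ℂ), ∀ x ∈ I₀, c • x ∈ I₀ := fun c x hx =>
    ⟨SMulMemClass.smul_mem c hx.1, hIsmul c x hx.2⟩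
  have hI₀l : ∀ b ∈ (A : Set B), ∀ x ∈ I₀, b * x ∈ I₀ := fun b hb x hx =>
    ⟨mul_mem hb hx.1, hIl b (Set.mem_univ b) x hx.2⟩
  have hI₀r : ∀ b ∈ (A : Set B), ∀ x ∈ I₀, x * b ∈ I₀ := fun b hb x hx =>
    ⟨mul_mem hx.1 hb, hIr b (Set.mem_univ b) x hx.2⟩
  have hI₀closed : IsClosed I₀ := hA.inter hIclosed
  have hD₀I₀ : ¬ D₀ ⊆ I₀ := fun h => hz3 (h haD₀).2
  obtain ⟨w, hwA, hw1, hw2, hw3⟩ :=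
    hF D₀ hD₀A hD₀0 hD₀add hD₀smul hD₀mul hD₀star hD₀closed hD₀her
      I₀ hI₀A hI₀0 hI₀add hI₀smul hI₀l hI₀r hI₀closed hD₀I₀
  -- star w * w is approximately invariant
  have hwH : star w * w ∈ Hs := Set.mem_sInter.mp hw1 Hs hPH
  have hwT : Tendsto (fun n => en a n * (star w * w) * en a n) atTop (𝓝 (star w * w)) := hwH.2
  have hwe : Tendsto (fun n => w * en a n) atTop (𝓝 w) := by
    have hl := left_tendsto ha hwT
    have hr := right_tendsto ha hwT
    have hq : Tendsto (fun n => (star w * w) - en a n * (star w * w)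
        - (star w * w) * en a n + en a n * (star w * w) * en a n) atTop (𝓝 0) := by
      have h := (((tendsto_const_nhds (x := star w * w) (f := atTop)).sub hl).sub hr).add hwT
      simpa using h
    apply tendsto_of_sq_norm_le (g := fun n => ‖(star w * w) - en a n * (star w * w)
        - (star w * w) * en a n + en a n * (star w * w) * en a n‖)
    · intro n
      have hid : star (w - w * en a n) * (w - w * en a n)
          = (star w * w) - en a n * (star w * w) - (star w * w) * en a n
            + en a n * (star w * w) * en a n := by
        rw [star_sub, star_mul, (en_sa a n).star_eq]
        noncomm_ring
      refine le_of_eq ?_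
      calc ‖w * en a n - w‖^2 = ‖w - w * en a n‖^2 := by rw [norm_sub_rev]
        _ = ‖star (w - w * en a n) * (w - w * en a n)‖ := by
            rw [CStarRing.norm_star_mul_self, sq]
        _ = _ := by rw [hid]
    · have h := norm_sub_tendsto hq
      simpa using h
  have hew : Tendsto (fun n => en a n * star w) atTop (𝓝 (star w)) := by
    have h := hwe.star
    convert h using 2 with n
    rw [star_mul, (en_sa a n).star_eq]
  -- the sequence converging to the desired element
  set u : ℕ → B := fun n => w * cn a n * z with hu_def
  have hprod : ∀ n m, (u n - u m) * star (u n - u m)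
      = (w * en a n - w * en a m) * (en a n * star w - en a m * star w) := by
    intro n m
    have h1 : (u n - u m) * star (u n - u m)
        = w * (cn a n * (a * cn a n)) * star w - w * (cn a n * (a * cn a m)) * star w
          - w * (cn a m * (a * cn a n)) * star w + w * (cn a m * (a * cn a m)) * star w := by
      simp only [hu_def, ha_def, star_sub, star_mul, (cn_sa (z * star z) n).star_eq,
        (cn_sa (z * star z) m).star_eq, star_star]
      noncomm_ring
    rw [h1, cn_mul_a_mul_cn ha n n, cn_mul_a_mul_cn ha n m, cn_mul_a_mul_cn ha m n,
      cn_mul_a_mul_cn ha m m]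
    noncomm_ring
  have hcauchy : CauchySeq u := by
    have hv : CauchySeq (fun n => w * en a n) := hwe.cauchySeq
    rw [Metric.cauchySeq_iff] at hv ⊢
    intro ε hε
    obtain ⟨N, hN⟩ := hv ε hε
    refine ⟨N, fun m hm n hn => ?_⟩
    have key : dist (u m) (u n) ≤ dist (w * en a m) (w * en a n) := by
      rw [dist_eq_norm, dist_eq_norm]
      have h2 : ‖u m - u n‖^2 ≤ ‖w * en a m - w * en a n‖^2 := by
        calc ‖u m - u n‖^2 = ‖(u m - u n) * star (u m - u n)‖ := by
              rw [CStarRing.norm_self_mul_star, sq]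
          _ = ‖(w * en a m - w * en a n) * (en a m * star w - en a n * star w)‖ := by
              rw [hprod m n]
          _ ≤ ‖w * en a m - w * en a n‖ * ‖en a m * star w - en a n * star w‖ :=
              norm_mul_le _ _
          _ = ‖w * en a m - w * en a n‖ * ‖w * en a m - w * en a n‖ := by
              congr 1
              have hst : en a m * star w - en a n * star w
                  = star (w * en a m - w * en a n) := by
                rw [star_sub, star_mul, star_mul, (en_sa a m).star_eq, (en_sa a n).star_eq]
              rw [hst, norm_star]
          _ = ‖w * en a m - w * en a n‖^2 := (sq _).symm
      exact (pow_le_pow_iff_left₀ (norm_nonneg _) (norm_nonneg _) two_ne_zero).mp h2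
    exact lt_of_le_of_lt key (hN m hm n hn)
  obtain ⟨z', hz'⟩ := cauchySeq_tendsto_of_complete hcauchy
  have husq : ∀ n, u n * star (u n) = (w * en a n) * (en a n * star w) := by
    intro n
    have h1 : u n * star (u n) = w * (cn a n * (a * cn a n)) * star w := by
      simp only [hu_def, ha_def, star_mul, (cn_sa (z * star z) n).star_eq, star_star]
      noncomm_ring
    rw [h1, cn_mul_a_mul_cn ha n n]
    noncomm_ring
  have h5 : z' * star z' = w * star w := by
    have hL : Tendsto (fun n => u n * star (u n)) atTop (𝓝 (z' * star z')) := hz'.mul hz'.star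
    have hR : Tendsto (fun n => (w * en a n) * (en a n * star w)) atTop (𝓝 (w * star w)) :=
      hwe.mul hew
    simp only [husq] at hL
    exact tendsto_nhds_unique hL hR
  have hmemD : ∀ n, star (u n) * u n ∈ D := by
    intro n
    have hbsa : IsSelfAdjoint (star w * w) := IsSelfAdjoint.star_mul_self w
    have h1 : cn a n * (star w * w) * cn a n ≤ ‖star w * w‖ • (cn a n * cn a n) := by
      have h := CStarAlgebra.star_left_conjugate_le_norm_smul (a := cn a n) (b := star w * w) hbsa
      rwa [(cn_sa a n).star_eq] at h
    have h2 : ‖star w * w‖ • (cn a n * cn a n) ≤ ‖star w * w‖ • ((((n : ℝ)+1)^2) • a) :=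
      smul_le_smul_of_nonneg_left (cn_mul_cn_le ha n) (norm_nonneg _)
    have h3 := star_left_conjugate_le_conjugate (h1.trans h2) z
    have h4 : star (u n) * u n = star z * (cn a n * (star w * w) * cn a n) * z := by
      simp only [hu_def, star_mul, (cn_sa a n).star_eq]
      noncomm_ring
    have h6 : star z * (‖star w * w‖ • ((((n : ℝ)+1)^2) • a)) * z
        = (‖star w * w‖ * (((n : ℝ)+1)^2)) • ((star z * z) * (star z * z)) := by
      rw [smul_smul, mul_smul_comm, smul_mul_assoc]
      congr 1
      rw [ha_def]
      noncomm_ring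
    have hpp : (star z * z) * (star z * z) ∈ D := hDmul _ hz1 _ hz1
    have hsm : (‖star w * w‖ * (((n : ℝ)+1)^2)) • ((star z * z) * (star z * z)) ∈ D := by
      have h := hDsmul ((‖star w * w‖ * (((n : ℝ)+1)^2) : ℝ) : ℂ) _ hpp
      rwa [Complex.coe_smul] at h
    exact hDher _ (Set.mem_univ _) _ hsm (star_mul_self_nonneg _)
      (by rw [h4]; exact h3.trans_eq h6)
  have h7 : star z' * z' ∈ D :=
    hDclosed.mem_of_tendsto (hz'.star.mul hz') (Filter.Eventually.of_forall hmemD)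
  refine ⟨z', Set.mem_univ _, h7, ?_, ?_⟩
  · rw [h5]; exact hw2
  · rw [h5]
    intro hI'
    exact hw3 ⟨mul_mem hwA (star_mem hwA), hI'⟩
end

section
/- Let A = C₀(X) for a locally compact Hausdorff space X, and F ⊆ A₊. Then F is a filling family for A if and only if the open supports {x ∈ X : f(x) > 0} of the functions f ∈ F form a base of the topology of X. -/
open scoped ZeroAtInfty ComplexOrder

variable {X : Type*} [TopologicalSpace X] [LocallyCompactSpace X] [T2Space X]

/-- `F` is a filling family for `C₀(X, ℂ)`: for every hereditary C*-subalgebra `D`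
and every closed two-sided ideal `I` of `C₀(X, ℂ)` with `D ⊄ I`, there is `z` with
`star z * z ∈ D`, `z * star z ∈ F` and `z * star z ∉ I`.  (The order on `ℂ`-valued
functions is the pointwise one coming from the partial order of `ℂ`.) -/
def IsFillingFamilyC0 (F : Set C₀(X, ℂ)) : Prop :=
  ∀ D : Set C₀(X, ℂ), (0 : C₀(X, ℂ)) ∈ D →
    (∀ x ∈ D, ∀ y ∈ D, x + y ∈ D) →
    (∀ (c : ℂ), ∀ x ∈ D, c • x ∈ D) →
    (∀ x ∈ D, ∀ y ∈ D, x * y ∈ D) →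
    (∀ x ∈ D, star x ∈ D) →
    IsClosed D →
    (∀ a : C₀(X, ℂ), ∀ d ∈ D, (∀ t : X, 0 ≤ a t) → (∀ t : X, a t ≤ d t) → a ∈ D) →
  ∀ I : Set C₀(X, ℂ), (0 : C₀(X, ℂ)) ∈ I →
    (∀ x ∈ I, ∀ y ∈ I, x + y ∈ I) →
    (∀ (c : ℂ), ∀ x ∈ I, c • x ∈ I) →
    (∀ a : C₀(X, ℂ), ∀ x ∈ I, a * x ∈ I) →
    (∀ a : C₀(X, ℂ), ∀ x ∈ I, x * a ∈ I) →
    IsClosed I →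
  ¬ D ⊆ I →
  ∃ z : C₀(X, ℂ), star z * z ∈ D ∧ z * star z ∈ F ∧ z * star z ∉ I

section FillingAuxiliary

open Filter Topology Set

set_option linter.unusedSectionVars false


set_option linter.unusedSectionVars false

lemma FillingAux.continuous_eval_c0 (t : X) : Continuous fun f : C₀(X, ℂ) => f t := by
  have h1 : Continuous fun f : C₀(X, ℂ) => f.toBCF :=
    (ZeroAtInftyContinuousMap.isometry_toBCF (α := X) (β := ℂ)).continuous
  exact (continuous_eval_const t : Continuous fun g : BoundedContinuousFunction X ℂ => g t).comp h1

lemma FillingAux.star_mul_apply_c0 (z : C₀(X, ℂ)) (t : X) :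
    (star z * z) t = (Complex.normSq (z t) : ℂ) := by
  simp [Complex.normSq_eq_conj_mul_self]

lemma FillingAux.exists_sqrt (f : C₀(X, ℂ)) (hf : ∀ t, 0 ≤ f t) :
    ∃ z : C₀(X, ℂ), star z * z = f ∧ z * star z = f := by
  have him : ∀ t, (f t).im = 0 := fun t => ((Complex.le_def.mp (hf t)).2).symm
  have hre : ∀ t, 0 ≤ (f t).re := fun t => by simpa using (Complex.le_def.mp (hf t)).1
  have hcont : Continuous fun t => ((Real.sqrt (f t).re : ℝ) : ℂ) :=
    Complex.continuous_ofReal.comp (Real.continuous_sqrt.comp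
      (Complex.continuous_re.comp (map_continuous f)))
  have hzi : Tendsto (fun t => ((Real.sqrt (f t).re : ℝ) : ℂ)) (cocompact X) (𝓝 0) := by
    have h0 : Tendsto (fun t => f t) (cocompact X) (𝓝 0) := zero_at_infty f
    have h1 : Tendsto (fun t => (f t).re) (cocompact X) (𝓝 0) := by
      exact (Complex.continuous_re.tendsto 0).comp h0
    have h2 : Tendsto (fun t => Real.sqrt (f t).re) (cocompact X) (𝓝 0) := by
      have h2' := (Real.continuous_sqrt.tendsto 0).comp h1; rwa [Real.sqrt_zero] at h2'
    exact (Complex.continuous_ofReal.tendsto 0).comp h2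
  set z : C₀(X, ℂ) := ⟨⟨fun t => ((Real.sqrt (f t).re : ℝ) : ℂ), hcont⟩, hzi⟩ with hz
  have hzapp : ∀ t, z t = ((Real.sqrt (f t).re : ℝ) : ℂ) := fun t => rfl
  have key : ∀ t, z t * z t = f t := by
    intro t
    rw [hzapp, ← Complex.ofReal_mul, Real.mul_self_sqrt (hre t)]
    exact Complex.ext (by simp) (by simp [him t])
  refine ⟨z, ?_, ?_⟩ <;> ext t
  · simp only [ZeroAtInftyContinuousMap.coe_mul, ZeroAtInftyContinuousMap.coe_star,
      Pi.mul_apply, Pi.star_apply]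
    rw [show star (z t) = z t by rw [hzapp]; exact Complex.conj_ofReal _]
    exact key t
  · simp only [ZeroAtInftyContinuousMap.coe_mul, ZeroAtInftyContinuousMap.coe_star,
      Pi.mul_apply, Pi.star_apply]
    rw [show star (z t) = z t by rw [hzapp]; exact Complex.conj_ofReal _]
    exact key t

/-- evaluation as an additive monoid hom -/
noncomputable def FillingAux.evalHom (t : X) : C₀(X, ℂ) →+ ℂ where
  toFun f := f t
  map_zero' := rfl
  map_add' f g := by simp


lemma FillingAux.mem_of_vanish (I : Set C₀(X, ℂ)) (h0 : (0 : C₀(X, ℂ)) ∈ I)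
    (hadd : ∀ x ∈ I, ∀ y ∈ I, x + y ∈ I)
    (hmul : ∀ a : C₀(X, ℂ), ∀ x ∈ I, a * x ∈ I)
    (hcl : IsClosed I)
    (d : C₀(X, ℂ)) (hd : ∀ t : X, (∀ g ∈ I, g t = 0) → d t = 0) :
    d ∈ I := by
  rw [← hcl.closure_eq, Metric.mem_closure_iff]
  intro ε hε
  set K : Set X := {t | ε / 2 ≤ ‖d t‖} with hKdef
  have hKcl : IsClosed K := isClosed_le continuous_const ((map_continuous d).norm)
  have hK : IsCompact K := by
    have h0' : Tendsto (fun t => d t) (cocompact X) (𝓝 0) := zero_at_infty d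
    have hmem : (fun t => d t) ⁻¹' Metric.ball 0 (ε / 2) ∈ cocompact X :=
      h0' (Metric.ball_mem_nhds 0 (by positivity))
    obtain ⟨s, hsc, hss⟩ := mem_cocompact.mp hmem
    refine hsc.of_isClosed_subset hKcl fun t ht => ?_
    by_contra hts
    have h2 := hss hts
    simp only [mem_preimage, Metric.mem_ball, dist_zero_right] at h2
    have ht' : ε / 2 ≤ ‖d t‖ := ht
    linarith
  rcases eq_empty_or_nonempty K with hKe | hKne
  · refine ⟨0, h0, ?_⟩
    rw [dist_zero_right, ← ZeroAtInftyContinuousMap.norm_toBCF_eq_norm]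
    have hle : ‖d.toBCF‖ ≤ ε / 2 := by
      refine (BoundedContinuousFunction.norm_le (by positivity)).mpr fun t => ?_
      have ht : t ∉ K := by rw [hKe]; exact notMem_empty t
      simp only [hKdef, mem_setOf_eq, not_le] at ht
      exact le_of_lt ht
    linarith
  · have hgex : ∀ t : K, ∃ g : C₀(X, ℂ), g ∈ I ∧ g (t : X) ≠ 0 := by
      rintro ⟨t, ht⟩
      by_contra hc
      push_neg at hc
      have hdt : d t = 0 := hd t fun g hg => hc g hg
      have ht' : ε / 2 ≤ ‖d t‖ := ht
      rw [hdt] at ht'; simp at ht'; linarith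
    choose g hgI hgne using hgex
    set V : K → Set X := fun i => {s | 0 < ((star (g i) * g i) s).re} with hVdef
    have hVopen : ∀ i, IsOpen (V i) := fun i =>
      isOpen_lt continuous_const (Complex.continuous_re.comp (map_continuous _))
    have happ : ∀ (i : K) (t : X),
        (star (g i) * g i) t = (Complex.normSq (g i t) : ℂ) := by
      intro i t; simp [Complex.normSq_eq_conj_mul_self]
    have hcov : K ⊆ ⋃ i, V i := by
      intro t ht
      refine mem_iUnion.mpr ⟨⟨t, ht⟩, ?_⟩
      simp only [hVdef, mem_setOf_eq, happ, Complex.ofReal_re]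
      exact Complex.normSq_pos.mpr (hgne ⟨t, ht⟩)
    obtain ⟨s, hs⟩ := hK.elim_finite_subcover V hVopen hcov
    set h : C₀(X, ℂ) := ∑ i ∈ s, star (g i) * g i with hhdef
    have hhI : h ∈ I := by
      refine Finset.sum_induction _ (· ∈ I) (fun a b ha hb => hadd a ha b hb) h0 fun i _ => ?_
      exact hmul (star (g i)) (g i) (hgI i)
    set φ : X → ℝ := fun t => ∑ i ∈ s, Complex.normSq (g i t) with hφdef
    have hreal : ∀ t, h t = ((φ t : ℝ) : ℂ) := by
      intro t
      have h1 : h t = ∑ i ∈ s, (star (g i) * g i) t :=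
        map_sum (evalHom (X := X) t) (fun i => star (g i) * g i) s
      rw [h1, hφdef, Complex.ofReal_sum]
      exact Finset.sum_congr rfl fun i _ => happ i t
    have hφcont : Continuous φ := by
      apply continuous_finset_sum
      intro i _
      exact Complex.continuous_normSq.comp (map_continuous (g i))
    have hφ0 : ∀ t, 0 ≤ φ t := fun t =>
      Finset.sum_nonneg fun i _ => Complex.normSq_nonneg _
    have hφK : ∀ t ∈ K, 0 < φ t := by
      intro t ht
      obtain ⟨i, his, hti⟩ := by
        have h2 := hs ht
        simpa only [mem_iUnion, exists_prop] using h2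
      refine Finset.sum_pos' (fun j _ => Complex.normSq_nonneg _) ⟨i, his, ?_⟩
      have h3 := hti
      simp only [hVdef, mem_setOf_eq, happ, Complex.ofReal_re] at h3
      exact h3
    obtain ⟨x₀, hx₀K, hx₀min⟩ := hK.exists_isMinOn hKne hφcont.continuousOn
    have hc : 0 < φ x₀ := hφK x₀ hx₀K
    set c : ℝ := φ x₀ with hcdef
    have hM0 : 0 ≤ ‖d‖ := norm_nonneg d
    have hdle : ∀ t, ‖d t‖ ≤ ‖d‖ := by
      intro t
      rw [← ZeroAtInftyContinuousMap.norm_toBCF_eq_norm]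
      exact BoundedContinuousFunction.norm_coe_le_norm d.toBCF t
    obtain ⟨δ, hδ, hδbound⟩ : ∃ δ : ℝ, 0 < δ ∧ ‖d‖ * δ / c ≤ ε / 2 := by
      refine ⟨ε * c / (2 * (‖d‖ + 1)), by positivity, ?_⟩
      rw [div_le_iff₀ hc]
      have h2 : ‖d‖ * (ε * c / (2 * (‖d‖ + 1))) = ε * c * (‖d‖ / (2 * (‖d‖ + 1))) := by
        ring
      have h3 : ‖d‖ / (2 * (‖d‖ + 1)) ≤ 1 / 2 := by
        rw [div_le_div_iff₀ (by positivity) (by norm_num)]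
        linarith
      calc ‖d‖ * (ε * c / (2 * (‖d‖ + 1))) = ε * c * (‖d‖ / (2 * (‖d‖ + 1))) := h2
        _ ≤ ε * c * (1 / 2) := by
            apply mul_le_mul_of_nonneg_left h3 (by positivity)
        _ = ε / 2 * c := by ring
    have hden : ∀ t, (h t + (δ : ℂ)) ≠ 0 := by
      intro t heq
      have h4 : φ t + δ = 0 := by
        have h5 := congrArg Complex.re heq
        simpa [hreal t] using h5
      nlinarith [hφ0 t]
    have hdenre : ∀ t, h t + (δ : ℂ) = ((φ t + δ : ℝ) : ℂ) := by
      intro t; rw [hreal t]; norm_cast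
    have hacont : Continuous fun t => d t / (h t + (δ : ℂ)) := by
      exact (map_continuous d).div ((map_continuous h).add continuous_const) hden
    have hazi : Tendsto (fun t => d t / (h t + (δ : ℂ))) (cocompact X) (𝓝 0) := by
      rw [tendsto_zero_iff_norm_tendsto_zero]
      have hbound : ∀ t, ‖d t / (h t + (δ : ℂ))‖ ≤ ‖d t‖ * δ⁻¹ := by
        intro t
        rw [norm_div, div_eq_mul_inv]
        have h1 : δ ≤ ‖h t + (δ : ℂ)‖ := by
          rw [hdenre t]
          simp only [Complex.norm_real, Real.norm_eq_abs]
          rw [abs_of_nonneg (by linarith [hφ0 t])]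
          linarith [hφ0 t]
        gcongr
      have hlim : Tendsto (fun t => ‖d t‖ * δ⁻¹) (cocompact X) (𝓝 0) := by
        have h6 := (tendsto_zero_iff_norm_tendsto_zero.mp (zero_at_infty d)).mul_const δ⁻¹
        simpa using h6
      exact squeeze_zero (fun t => norm_nonneg _) hbound hlim
    set a : C₀(X, ℂ) := ⟨⟨fun t => d t / (h t + (δ : ℂ)), hacont⟩, hazi⟩ with hadef
    refine ⟨a * h, hmul a h hhI, ?_⟩
    rw [dist_eq_norm, ← ZeroAtInftyContinuousMap.norm_toBCF_eq_norm]
    have hfinal : ‖(d - a * h).toBCF‖ ≤ ε / 2 := by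
      refine (BoundedContinuousFunction.norm_le (by positivity)).mpr fun t => ?_
      show ‖(d - a * h) t‖ ≤ ε / 2
      have hat : a t = d t / (h t + (δ : ℂ)) := rfl
      have hsub : (d - a * h) t = d t * (δ : ℂ) / (h t + (δ : ℂ)) := by
        simp only [ZeroAtInftyContinuousMap.coe_sub, ZeroAtInftyContinuousMap.coe_mul,
          Pi.sub_apply, Pi.mul_apply, hat]
        rw [eq_div_iff (hden t), sub_mul, mul_right_comm, div_mul_cancel₀ _ (hden t)]
        ring
      rw [hsub, norm_div, norm_mul, hdenre t]
      simp only [Complex.norm_real, Real.norm_eq_abs]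
      rw [abs_of_nonneg (by linarith [hφ0 t] : (0:ℝ) ≤ φ t + δ),
        abs_of_nonneg (le_of_lt hδ)]
      rcases le_or_gt (ε / 2) ‖d t‖ with htK | htK
      · have htK' : t ∈ K := htK
        have hφt : c ≤ φ t := hx₀min htK'
        have h1 : ‖d t‖ * δ / (φ t + δ) ≤ ‖d‖ * δ / c := by
          apply div_le_div₀ (by positivity) (by gcongr; exact hdle t) hc (by linarith)
        exact h1.trans hδbound
      · have h1 : δ / (φ t + δ) ≤ 1 := by
          rw [div_le_one (by linarith [hφ0 t])]; linarith [hφ0 t]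
        calc ‖d t‖ * δ / (φ t + δ) = ‖d t‖ * (δ / (φ t + δ)) := by ring
          _ ≤ ‖d t‖ * 1 := by gcongr
          _ = ‖d t‖ := by ring
          _ ≤ ε / 2 := le_of_lt htK
    linarith

end FillingAuxiliary


/-- A family `F` of positive functions in `C₀(X, ℂ)` is filling if and only if the
open supports `{x | f x ≠ 0}` of the functions `f ∈ F` form a base of the topology
of `X`. -/
theorem isFillingFamilyC0_iff_supports_basis (F : Set C₀(X, ℂ))
    (hF : ∀ f ∈ F, ∀ x : X, 0 ≤ f x) :
    IsFillingFamilyC0 F ↔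
      ∀ U : Set X, IsOpen U → ∀ x ∈ U, ∃ f ∈ F, f x ≠ 0 ∧ ∀ y : X, f y ≠ 0 → y ∈ U := by
  open Filter Topology Set in
  unfold IsFillingFamilyC0
  have mem_of_vanish := FillingAux.mem_of_vanish (X := X)
  constructor
  · -- filling → basis
    intro hfill U hU x hxU
    set D : Set C₀(X, ℂ) := {h | ∀ t, t ∉ U → h t = 0} with hDdef
    set I : Set C₀(X, ℂ) := {h | h x = 0} with hIdef
    have hDcl : IsClosed D := by
      have hrw : D = ⋂ (t : X) (_ : t ∉ U), (fun h : C₀(X, ℂ) => h t) ⁻¹' {0} := by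
        ext hh; simp [hDdef]
      rw [hrw]
      exact isClosed_iInter fun t => isClosed_iInter fun _ =>
        isClosed_singleton.preimage (FillingAux.continuous_eval_c0 t)
    have hIcl : IsClosed I :=
      isClosed_singleton.preimage (FillingAux.continuous_eval_c0 x)
    -- a bump function
    obtain ⟨b, hb1, hb0, hbc, _⟩ := exists_continuous_one_zero_of_isCompact
      (isCompact_singleton : IsCompact {x}) hU.isClosed_compl
      (by simpa [Set.disjoint_singleton_left] using hxU)
    have hgc : Continuous fun t => ((b t : ℝ) : ℂ) :=
      Complex.continuous_ofReal.comp b.continuous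
    have hgz : Tendsto (fun t => ((b t : ℝ) : ℂ)) (cocompact X) (𝓝 0) :=
      (hbc.comp_left (g := fun r : ℝ => (r : ℂ)) Complex.ofReal_zero).is_zero_at_infty
    set gb : C₀(X, ℂ) := ⟨⟨fun t => ((b t : ℝ) : ℂ), hgc⟩, hgz⟩ with hgb
    have hgbD : gb ∈ D := by
      intro t ht
      have : b t = 0 := hb0 ht
      show ((b t : ℝ) : ℂ) = 0
      rw [this]; norm_num
    have hgbI : gb ∉ I := by
      have : b x = 1 := hb1 rfl
      show ¬ ((b x : ℝ) : ℂ) = 0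
      rw [this]; norm_num
    have hDI : ¬ D ⊆ I := fun hsub => hgbI (hsub hgbD)
    obtain ⟨z, hzD, hzF, hzI⟩ := hfill D
      (fun t _ => rfl)
      (fun a ha b hb t ht => by
        have h1 : (a + b) t = a t + b t := by
          simp [ZeroAtInftyContinuousMap.coe_add]
        rw [h1, ha t ht, hb t ht, add_zero])
      (fun c a ha t ht => by
        have h1 : (c • a) t = c * a t := by
          simp [ZeroAtInftyContinuousMap.coe_smul]
        rw [h1, ha t ht, mul_zero])
      (fun a ha b hb t ht => by
        have h1 : (a * b) t = a t * b t := by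
          simp [ZeroAtInftyContinuousMap.coe_mul]
        rw [h1, ha t ht, zero_mul])
      (fun a ha t ht => by
        have h1 : (star a) t = star (a t) := by
          simp [ZeroAtInftyContinuousMap.coe_star]
        rw [h1, ha t ht, star_zero])
      hDcl
      (fun a d hd hpos hle t ht => by
        have h1 : a t ≤ d t := hle t
        rw [hd t ht] at h1
        exact le_antisymm h1 (hpos t))
      I rfl
      (fun a ha b hb => by
        show (a + b) x = 0
        have h1 : (a + b) x = a x + b x := by simp [ZeroAtInftyContinuousMap.coe_add]
        rw [h1, ha, hb, add_zero])
      (fun c a ha => by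
        show (c • a) x = 0
        have h1 : (c • a) x = c * a x := by simp [ZeroAtInftyContinuousMap.coe_smul]
        rw [h1, ha, mul_zero])
      (fun a b hb => by
        show (a * b) x = 0
        have h1 : (a * b) x = a x * b x := by simp [ZeroAtInftyContinuousMap.coe_mul]
        rw [h1, hb, mul_zero])
      (fun a b hb => by
        show (b * a) x = 0
        have h1 : (b * a) x = b x * a x := by simp [ZeroAtInftyContinuousMap.coe_mul]
        rw [h1, hb, zero_mul])
      hIcl hDI
    refine ⟨z * star z, hzF, hzI, fun y hy => ?_⟩
    by_contra hyU
    apply hy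
    have h1 : (star z * z) y = 0 := hzD y hyU
    have h2 : (z * star z) y = (star z * z) y := by
      simp only [ZeroAtInftyContinuousMap.coe_mul, ZeroAtInftyContinuousMap.coe_star,
        Pi.mul_apply, Pi.star_apply]
      ring
    rw [h2, h1]
  · -- basis → filling
    intro hB D hD0 hDadd hDsmul hDmul hDstar hDcl hDher I hI0 hIadd hIsmul hImull hImulr
      hIcl hDI
    obtain ⟨d, hdD, hdI⟩ := Set.not_subset.mp hDI
    have hex : ∃ x : X, (∀ g ∈ I, g x = 0) ∧ d x ≠ 0 := by
      by_contra hc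
      push_neg at hc
      exact hdI (mem_of_vanish I hI0 hIadd hImull hIcl d fun t ht => hc t ht)
    obtain ⟨x, hxZ, hdx⟩ := hex
    set e : C₀(X, ℂ) := star d * d with hedef
    have heD : e ∈ D := hDmul (star d) (hDstar d hdD) d hdD
    have heapp : ∀ t, e t = (Complex.normSq (d t) : ℂ) :=
      fun t => FillingAux.star_mul_apply_c0 d t
    set c₀ : ℝ := Complex.normSq (d x) with hc₀def
    have hc₀ : 0 < c₀ := Complex.normSq_pos.mpr hdx
    set U : Set X := {t | c₀ / 2 < Complex.normSq (d t)} with hUdef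
    have hUopen : IsOpen U :=
      isOpen_lt continuous_const (Complex.continuous_normSq.comp (map_continuous d))
    have hxU : x ∈ U := by simp only [hUdef, mem_setOf_eq]; linarith
    obtain ⟨f, hfF, hfx, hfsupp⟩ := hB U hUopen x hxU
    have hfI : f ∉ I := fun hf => hfx (hxZ f hf)
    have hfpos : ∀ t, 0 ≤ f t := hF f hfF
    have him : ∀ t, (f t).im = 0 := fun t => ((Complex.le_def.mp (hfpos t)).2).symm
    have hM0 : 0 ≤ ‖f‖ := norm_nonneg f
    have hfle : ∀ t, ‖f t‖ ≤ ‖f‖ := by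
      intro t
      rw [← ZeroAtInftyContinuousMap.norm_toBCF_eq_norm]
      exact BoundedContinuousFunction.norm_coe_le_norm f.toBCF t
    set k : ℂ := ((2 * ‖f‖ / c₀ : ℝ) : ℂ) with hkdef
    have hkeD : k • e ∈ D := hDsmul k e heD
    have hkeapp : ∀ t, (k • e) t = ((2 * ‖f‖ / c₀ * Complex.normSq (d t) : ℝ) : ℂ) := by
      intro t
      have h1 : (k • e) t = k * e t := by simp [ZeroAtInftyContinuousMap.coe_smul]
      rw [h1, heapp t, hkdef, ← Complex.ofReal_mul]
    have hle : ∀ t, f t ≤ (k • e) t := by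
      intro t
      rw [hkeapp t, Complex.le_def]
      constructor
      · simp only [Complex.ofReal_re]
        rcases eq_or_ne (f t) 0 with hft | hft
        · rw [hft]
          simp only [Complex.zero_re]
          exact mul_nonneg (div_nonneg (by positivity) hc₀.le) (Complex.normSq_nonneg _)
        · have htU : t ∈ U := hfsupp t hft
          have hnt : c₀ / 2 < Complex.normSq (d t) := htU
          have h2 : (f t).re ≤ ‖f‖ := by
            calc (f t).re ≤ |(f t).re| := le_abs_self _
              _ ≤ ‖f t‖ := Complex.abs_re_le_norm _
              _ = ‖f t‖ := rfl
              _ ≤ ‖f‖ := hfle t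
          have h3 : ‖f‖ ≤ 2 * ‖f‖ / c₀ * Complex.normSq (d t) := by
            have h4 : (1 : ℝ) ≤ 2 * Complex.normSq (d t) / c₀ := by
              rw [le_div_iff₀ hc₀]
              linarith
            calc ‖f‖ = ‖f‖ * 1 := by ring
              _ ≤ ‖f‖ * (2 * Complex.normSq (d t) / c₀) :=
                  mul_le_mul_of_nonneg_left h4 hM0
              _ = 2 * ‖f‖ / c₀ * Complex.normSq (d t) := by ring
          linarith
      · simp [him t]
    have hfD : f ∈ D := hDher f (k • e) hkeD hfpos hle
    obtain ⟨z, hz1, hz2⟩ := FillingAux.exists_sqrt f hfpos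
    exact ⟨z, by rw [hz1]; exact hfD, by rw [hz2]; exact hfF, by rw [hz2]; exact hfI⟩
end

section
/- Define g : (0,1] → (0,1] by g(t) := min(4·max(t - 1/2, 0), t), and let φ : C₀(0,1] → C₀(0,1] be the *-homomorphism φ(f) := f ∘ g. Then there is no *-homomorphism ψ : C_b(0,1] → C_b(0,1] from the bounded continuous functions to themselves with ψ(f) = f ∘ g for all f ∈ C₀(0,1]. -/
open scoped ZeroAtInfty BoundedContinuousFunction

open Complex Filter

namespace NoMultAux

abbrev X : Type := ↥(Set.Ioc (0:ℝ) 1)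

lemma zeroAtInfty_aux (f : X → ℂ)
    (h : ∀ ε : ℝ, 0 < ε → ∃ a : ℝ, 0 < a ∧ ∀ t : X, (t:ℝ) ≤ a → ‖f t‖ < ε) :
    Tendsto f (cocompact X) (nhds 0) := by
  rw [Metric.tendsto_nhds]
  intro ε hε
  obtain ⟨a, ha, hfa⟩ := h ε hε
  rw [Filter.hasBasis_cocompact.eventually_iff]
  refine ⟨Subtype.val ⁻¹' Set.Icc a 1, ?_, ?_⟩
  · rw [Topology.IsEmbedding.subtypeVal.isCompact_iff, Subtype.image_preimage_coe]
    have : Set.Ioc (0:ℝ) 1 ∩ Set.Icc a 1 = Set.Icc a 1 := by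
      apply Set.inter_eq_self_of_subset_right
      intro t ht
      exact ⟨lt_of_lt_of_le ha ht.1, ht.2⟩
    rw [this]
    exact isCompact_Icc
  · intro t ht
    simp only [Set.mem_compl_iff, Set.mem_preimage, Set.mem_Icc, not_and, not_le] at ht
    have h1 : (t:ℝ) < a := by
      by_contra hcon
      exact absurd t.2.2 (not_le.mpr (ht (not_lt.mp hcon)))
    simpa [dist_eq_norm] using hfa t h1.le

/-- The bounded continuous function `t ↦ exp((1/t) i)`. -/
noncomputable def f₁ : X →ᵇ ℂ :=
  BoundedContinuousFunction.ofNormedAddCommGroup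
    (fun t : X => Complex.exp ((((1:ℝ)/(t:ℝ) : ℝ) : ℂ) * Complex.I))
    (by
      apply Complex.continuous_exp.comp
      apply Continuous.mul _ continuous_const
      apply Complex.continuous_ofReal.comp
      exact continuous_const.div continuous_subtype_val (fun t => ne_of_gt t.2.1))
    1
    (fun t => by
      rw [Complex.norm_exp]
      simp)

lemma f₁_apply (t : X) : f₁ t = Complex.exp ((((1:ℝ)/(t:ℝ) : ℝ) : ℂ) * Complex.I) := rfl

lemma norm_f₁ (t : X) : ‖f₁ t‖ = 1 := by
  rw [f₁_apply, Complex.norm_exp]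
  simp

/-- `H c` is the C₀ function `t ↦ min (t/c) 1`. -/
noncomputable def H (c : ℝ) (hc : 0 < c) : C₀(X, ℂ) where
  toFun t := (((min ((t:ℝ)/c) 1 : ℝ)) : ℂ)
  continuous_toFun := by
    apply Complex.continuous_ofReal.comp
    exact (continuous_subtype_val.div_const c).min continuous_const
  zero_at_infty' := by
    apply zeroAtInfty_aux
    intro ε hε
    refine ⟨ε * c / 2, by positivity, fun t ht => ?_⟩
    have h0 : 0 ≤ min ((t:ℝ)/c) 1 := le_min (div_nonneg t.2.1.le hc.le) one_pos.le
    rw [Complex.norm_real, Real.norm_eq_abs, _root_.abs_of_nonneg h0]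
    have : (t:ℝ)/c ≤ ε/2 := by
      rw [div_le_div_iff₀ hc (by norm_num : (0:ℝ) < 2)] at *
      nlinarith
    calc min ((t:ℝ)/c) 1 ≤ (t:ℝ)/c := min_le_left _ _
      _ ≤ ε/2 := this
      _ < ε := by linarith

lemma H_apply (c : ℝ) (hc : 0 < c) (t : X) :
    H c hc t = (((min ((t:ℝ)/c) 1 : ℝ)) : ℂ) := rfl

/-- The C₀ function `t ↦ f₁ t * H c t`. -/
noncomputable def F (c : ℝ) (hc : 0 < c) : C₀(X, ℂ) where
  toFun t := f₁ t * H c hc t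
  continuous_toFun := f₁.continuous.mul (H c hc).continuous
  zero_at_infty' := by
    apply zeroAtInfty_aux
    intro ε hε
    obtain ⟨a, ha, hfa⟩ :
        ∃ a : ℝ, 0 < a ∧ ∀ t : X, (t:ℝ) ≤ a → ‖H c hc t‖ < ε := by
      refine ⟨ε * c / 2, by positivity, fun t ht => ?_⟩
      have h0 : 0 ≤ min ((t:ℝ)/c) 1 := le_min (div_nonneg t.2.1.le hc.le) one_pos.le
      rw [H_apply, Complex.norm_real, Real.norm_eq_abs, _root_.abs_of_nonneg h0]
      have : (t:ℝ)/c ≤ ε/2 := by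
        rw [div_le_div_iff₀ hc (by norm_num : (0:ℝ) < 2)] at *
        nlinarith
      calc min ((t:ℝ)/c) 1 ≤ (t:ℝ)/c := min_le_left _ _
        _ ≤ ε/2 := this
        _ < ε := by linarith
    refine ⟨a, ha, fun t ht => ?_⟩
    have := hfa t ht
    calc ‖f₁ t * H c hc t‖ = ‖f₁ t‖ * ‖H c hc t‖ := norm_mul _ _
      _ = ‖H c hc t‖ := by rw [norm_f₁, one_mul]
      _ < ε := this

lemma F_toBCF (c : ℝ) (hc : 0 < c) :
    (F c hc).toBCF = f₁ * (H c hc).toBCF := by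
  ext t
  rfl

end NoMultAux

open NoMultAux in
/-- With `g(t) := min (4·(t - 1/2)₊) t` on `(0,1]`, there is no *-homomorphism
`ψ : C_b(0,1] → C_b(0,1]` satisfying `ψ(f) = f ∘ g` (extending `f` by `0` at `0`)
for all `f ∈ C₀(0,1]`. -/
theorem no_multiplier_extension :
    ¬ ∃ ψ : (↥(Set.Ioc (0:ℝ) 1) →ᵇ ℂ) →⋆ₐ[ℂ] (↥(Set.Ioc (0:ℝ) 1) →ᵇ ℂ),
      ∀ f : C₀(↥(Set.Ioc (0:ℝ) 1), ℂ), ∀ t : ↥(Set.Ioc (0:ℝ) 1),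
        ψ f.toBCF t =
          if ht : min (4 * max ((t : ℝ) - 1/2) 0) (t : ℝ) ∈ Set.Ioc (0:ℝ) 1
          then f ⟨min (4 * max ((t : ℝ) - 1/2) 0) (t : ℝ), ht⟩ else 0 := by
  rintro ⟨ψ, hψ⟩
  -- For `0 < c ≤ 1/2`, the point `P c := 1/2 + c/4` satisfies `g (P c) = c`,
  -- and `ψ f₁ (P c) = f₁ c`.
  have hPmem : ∀ c : ℝ, 0 < c → c ≤ 1/2 → (1/2 + c/4) ∈ Set.Ioc (0:ℝ) 1 := by
    intro c hc hc2
    constructor <;> [linarith; linarith]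
  have hgP : ∀ c : ℝ, 0 < c → c ≤ 1/2 →
      min (4 * max ((1/2 + c/4 : ℝ) - 1/2) 0) (1/2 + c/4 : ℝ) = c := by
    intro c hc hc2
    have h1 : max ((1/2 + c/4 : ℝ) - 1/2) 0 = c/4 := by
      rw [max_eq_left] <;> linarith
    rw [h1]
    rw [min_eq_left] <;> [ring_nf; linarith]
  have key : ∀ c : ℝ, ∀ hc : 0 < c, ∀ hc2 : c ≤ 1/2,
      ψ f₁ ⟨1/2 + c/4, hPmem c hc hc2⟩ = f₁ ⟨c, hc, by linarith⟩ := by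
    intro c hc hc2
    set P : X := ⟨1/2 + c/4, hPmem c hc hc2⟩ with hP
    have hgmem : min (4 * max ((P : ℝ) - 1/2) 0) (P : ℝ) ∈ Set.Ioc (0:ℝ) 1 := by
      rw [hP, hgP c hc hc2]; exact ⟨hc, by linarith⟩
    have hF := hψ (F c hc) P
    have hH := hψ (H c hc) P
    rw [dif_pos hgmem] at hF hH
    have hgc : (⟨min (4 * max ((P : ℝ) - 1/2) 0) (P : ℝ), hgmem⟩ : X)
        = ⟨c, hc, by linarith⟩ := by
      ext; exact hgP c hc hc2
    rw [hgc] at hF hH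
    have hH1 : H c hc ⟨c, hc, by linarith⟩ = 1 := by
      rw [H_apply]
      rw [div_self (ne_of_gt hc), min_self]
      norm_num
    rw [F_toBCF, map_mul] at hF
    have : ψ f₁ P * ψ (H c hc).toBCF P = f₁ ⟨c, hc, by linarith⟩ * H c hc ⟨c, hc, by linarith⟩ := hF
    rw [hH, hH1, mul_one, mul_one] at this
    exact this
  -- Two sequences approaching 1/2 on which ψ f₁ takes values 1 and -1.
  have hπ : (3:ℝ) < Real.pi := by
    have := Real.pi_gt_d6
    linarith
  have hπ0 : (0:ℝ) < Real.pi := by linarith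
  -- sequence values
  set c1 : ℕ → ℝ := fun n => (2 * Real.pi * (n+1))⁻¹ with hc1def
  set c2 : ℕ → ℝ := fun n => (Real.pi * (2*n+3))⁻¹ with hc2def
  have hc1pos : ∀ n : ℕ, 0 < c1 n := fun n => by positivity
  have hc2pos : ∀ n : ℕ, 0 < c2 n := fun n => by positivity
  have hc1le : ∀ n : ℕ, c1 n ≤ 1/2 := by
    intro n
    rw [hc1def]
    rw [inv_le_comm₀ (by positivity) (by norm_num)]
    have h := Nat.cast_nonneg (α := ℝ) n
    have : (1:ℝ) ≤ (n:ℝ) + 1 := by linarith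
    nlinarith
  have hc2le : ∀ n : ℕ, c2 n ≤ 1/2 := by
    intro n
    rw [hc2def]
    rw [inv_le_comm₀ (by positivity) (by norm_num)]
    have : (0:ℝ) ≤ (n:ℝ) := Nat.cast_nonneg n
    nlinarith
  -- f₁ values
  have hf1 : ∀ n : ℕ, f₁ ⟨c1 n, (hc1pos n), by linarith [hc1le n]⟩ = 1 := by
    intro n
    rw [f₁_apply]
    have hval : ((((1:ℝ)/(c1 n) : ℝ)) : ℂ) * Complex.I
        = ((n+1 : ℕ) : ℂ) * (2 * (Real.pi:ℂ) * Complex.I) := by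
      rw [hc1def]
      have : (1:ℝ) / (2 * Real.pi * ((n:ℝ)+1))⁻¹ = 2 * Real.pi * ((n:ℝ)+1) := by
        rw [one_div, inv_inv]
      rw [this]
      push_cast
      ring
    rw [hval, Complex.exp_nat_mul, Complex.exp_two_pi_mul_I, one_pow]
  have hf2 : ∀ n : ℕ, f₁ ⟨c2 n, (hc2pos n), by linarith [hc2le n]⟩ = -1 := by
    intro n
    rw [f₁_apply]
    have hval : ((((1:ℝ)/(c2 n) : ℝ)) : ℂ) * Complex.I
        = ((2*n+3 : ℕ) : ℂ) * ((Real.pi:ℂ) * Complex.I) := by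
      rw [hc2def]
      have : (1:ℝ) / (Real.pi * (2*(n:ℝ)+3))⁻¹ = Real.pi * (2*(n:ℝ)+3) := by
        rw [one_div, inv_inv]
      rw [this]
      push_cast
      ring
    rw [hval, Complex.exp_nat_mul, Complex.exp_pi_mul_I]
    exact Odd.neg_one_pow ⟨n+1, by ring⟩
  -- the point 1/2
  set p : X := ⟨1/2, by norm_num⟩ with hp
  -- ψ f₁ is continuous; evaluate along both sequences
  have hcont : Continuous (fun t : X => ψ f₁ t) := (ψ f₁).continuous
  have hhalf : ∀ (c : ℕ → ℝ) (hpos : ∀ n, 0 < c n) (hle : ∀ n, c n ≤ 1/2),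
      Tendsto c atTop (nhds 0) →
      Tendsto (fun n => ψ f₁ ⟨1/2 + c n/4, hPmem (c n) (hpos n) (hle n)⟩)
        atTop (nhds (ψ f₁ p)) := by
    intro c hpos hle hlim
    apply (hcont.continuousAt (x := p)).tendsto.comp
    rw [tendsto_subtype_rng]
    simp only [hp]
    have : Tendsto (fun n => (1:ℝ)/2 + c n / 4) atTop (nhds (1/2 + 0/4)) := by
      apply Tendsto.add tendsto_const_nhds
      exact hlim.div_const 4
    simpa using this
  have hlim1 : Tendsto c1 atTop (nhds 0) := by
    apply Tendsto.inv_tendsto_atTop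
    apply Tendsto.const_mul_atTop (by positivity : (0:ℝ) < 2 * Real.pi)
    exact tendsto_atTop_add_const_right _ 1 tendsto_natCast_atTop_atTop
  have hlim2 : Tendsto c2 atTop (nhds 0) := by
    apply Tendsto.inv_tendsto_atTop
    apply Tendsto.const_mul_atTop hπ0
    apply tendsto_atTop_add_const_right
    exact (tendsto_natCast_atTop_atTop (R := ℝ)).const_mul_atTop (by norm_num)
  have ht1 := hhalf c1 hc1pos hc1le hlim1
  have ht2 := hhalf c2 hc2pos hc2le hlim2
  have he1 : ∀ n : ℕ, ψ f₁ ⟨1/2 + c1 n/4, hPmem (c1 n) (hc1pos n) (hc1le n)⟩ = 1 := by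
    intro n
    rw [key (c1 n) (hc1pos n) (hc1le n)]
    exact hf1 n
  have he2 : ∀ n : ℕ, ψ f₁ ⟨1/2 + c2 n/4, hPmem (c2 n) (hc2pos n) (hc2le n)⟩ = -1 := by
    intro n
    rw [key (c2 n) (hc2pos n) (hc2le n)]
    exact hf2 n
  simp only [he1] at ht1
  simp only [he2] at ht2
  have h1 : ψ f₁ p = 1 := tendsto_nhds_unique ht1 tendsto_const_nhds
  have h2 : ψ f₁ p = -1 := tendsto_nhds_unique ht2 tendsto_const_nhds
  rw [h1] at h2
  norm_num at h2
end

section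
/- Let A be a C*-algebra, a ∈ A₊ nonzero, γ ∈ (0, ‖a‖), and define φ(t) := ((t - γ)₊ / t)^{1/2} for t > 0, φ(0) := 0. Then e := φ(a) ∈ A is a positive contraction and e·a·e = (a - γ)₊. Moreover, for any d ∈ A the element s := e·d satisfies γ·s*s ≤ d*·(a - γ)₊·d, hence ‖s‖² ≤ γ^{-1}·(γ + ‖(a-γ)₊·d‖·‖d‖) and in particular if d is such that ‖d*(a-γ)₊d - (a-γ)₊‖ < γ then ‖s‖² ≤ ‖a‖/γ. -/
set_option maxHeartbeats 1000000

lemma phi_cont (γ : ℝ) (hγ0 : 0 < γ) :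
    Continuous (fun t : ℝ => Real.sqrt (max (t - γ) 0 / t)) := by
  rw [continuous_iff_continuousAt]
  intro t₀
  rcases lt_or_ge t₀ γ with h | h
  · have hev : ∀ᶠ t in nhds t₀, Real.sqrt (max (t - γ) 0 / t) = 0 := by
      filter_upwards [eventually_lt_nhds h] with t ht
      have : max (t - γ) 0 = 0 := max_eq_right (by linarith)
      simp [this]
    exact ContinuousAt.congr continuousAt_const
      (by filter_upwards [hev] with t ht using ht.symm)
  · have ht0 : t₀ ≠ 0 := ne_of_gt (lt_of_lt_of_le hγ0 h)
    exact Real.continuous_sqrt.continuousAt.comp <|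
      (((continuous_id.sub continuous_const).max continuous_const).continuousAt).div
        continuousAt_id ht0


/-- For `0 ≠ a ≥ 0` in a C*-algebra and `0 < γ < ‖a‖`, the element
`e := φ(a)` with `φ(t) = ((t-γ)₊/t)^{1/2}` is a positive contraction with
`e·a·e = (a-γ)₊`; moreover for any `d`, `s := e·d` satisfies
`γ·s*s ≤ d*·(a-γ)₊·d`, hence `‖s‖² ≤ γ⁻¹(γ + ‖(a-γ)₊·d‖·‖d‖)`, and if
`‖d*(a-γ)₊d - (a-γ)₊‖ < γ` then `‖s‖² ≤ ‖a‖/γ`. -/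
theorem cutdown_contraction_control {A : Type*} [NonUnitalCStarAlgebra A] [PartialOrder A]
    [StarOrderedRing A] (a : A) (ha : 0 ≤ a) (ha0 : a ≠ 0) (γ : ℝ) (hγ0 : 0 < γ)
    (hγ : γ < ‖a‖) :
    letI e := cfcₙ (fun t : ℝ => Real.sqrt (max (t - γ) 0 / t)) a
    letI aγ := cfcₙ (fun t : ℝ => max (t - γ) 0) a
    0 ≤ e ∧ ‖e‖ ≤ 1 ∧ e * a * e = aγ ∧
      (∀ d : A,
        γ • (star (e * d) * (e * d)) ≤ star d * aγ * d ∧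
        ‖e * d‖ ^ 2 ≤ γ⁻¹ * (γ + ‖aγ * d‖ * ‖d‖) ∧
        (‖star d * aγ * d - aγ‖ < γ → ‖e * d‖ ^ 2 ≤ ‖a‖ / γ)) := by
  set f : ℝ → ℝ := fun t => Real.sqrt (max (t - γ) 0 / t) with hf_def
  set g : ℝ → ℝ := fun t => max (t - γ) 0 with hg_def
  set e := cfcₙ f a with he_def
  set aγ := cfcₙ g a with haγ_def
  have hspec : ∀ x ∈ quasispectrum ℝ a, 0 ≤ x := quasispectrum_nonneg_of_nonneg a ha
  have hf : Continuous f := phi_cont γ hγ0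
  have hf0 : f 0 = 0 := by simp [hf_def]
  have hg : Continuous g := by fun_prop
  have hg0 : g 0 = 0 := by simp [hg_def, hγ0.le]
  -- scalar facts
  have fact1 : ∀ t : ℝ, 0 ≤ t → f t * t * f t = g t := by
    intro t ht
    rcases ht.eq_or_lt with h | h
    · simp [← h, hf0, hg0]
    · have hnn : 0 ≤ g t / t := div_nonneg (le_max_right _ _) ht
      have : f t * t * f t = (f t * f t) * t := by ring
      rw [this, hf_def]
      simp only
      rw [Real.mul_self_sqrt hnn, div_mul_cancel₀ _ h.ne']
  have fact2 : ∀ t : ℝ, 0 ≤ t → γ * (f t * f t) ≤ g t := by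
    intro t ht
    rcases ht.eq_or_lt with h | h
    · simp [← h, hf0, hg0]
    · have hnn : 0 ≤ g t / t := div_nonneg (le_max_right _ _) ht
      have hsq : f t * f t = g t / t := Real.mul_self_sqrt hnn
      rw [hsq]
      rcases le_or_gt t γ with h2 | h2
      · have : g t = 0 := max_eq_right (by linarith)
        simp [this]
      · have hgt : g t = t - γ := max_eq_left (by linarith)
        calc γ * (g t / t) = g t * (γ / t) := by ring
          _ ≤ g t * 1 := mul_le_mul_of_nonneg_left ((div_le_one h).mpr h2.le) (le_max_right _ _)
          _ = g t := mul_one _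
  have fact3 : ∀ t : ℝ, 0 ≤ t → ‖f t‖ ≤ 1 := by
    intro t ht
    rw [Real.norm_eq_abs, abs_of_nonneg (Real.sqrt_nonneg _)]
    apply Real.sqrt_le_one.mpr
    rcases ht.eq_or_lt with h | h
    · simp [← h, hg0]
    · rw [div_le_one h]
      exact max_le (by linarith) ht
  -- positivity and selfadjointness
  have he : 0 ≤ e := cfcₙ_nonneg fun x _ => Real.sqrt_nonneg _
  have hesa : IsSelfAdjoint e := IsSelfAdjoint.of_nonneg he
  have haγ : 0 ≤ aγ := cfcₙ_nonneg fun x _ => le_max_right _ _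
  have hnorm_e : ‖e‖ ≤ 1 := norm_cfcₙ_le fun x hx => fact3 x (hspec x hx)
  -- e * a * e = aγ
  have heae : e * a * e = aγ := by
    show cfcₙ f a * a * cfcₙ f a = cfcₙ g a
    nth_rewrite 2 [← cfcₙ_id ℝ a (IsSelfAdjoint.of_nonneg ha)]
    rw [← cfcₙ_mul f id a hf.continuousOn hf0 continuousOn_id rfl,
        ← cfcₙ_mul _ f a (by exact (hf.mul continuous_id).continuousOn) (by simp [hf0])
          hf.continuousOn hf0]
    exact cfcₙ_congr fun x hx => fact1 x (hspec x hx)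
  -- γ • (e * e) ≤ aγ
  have hkey : γ • (e * e) ≤ aγ := by
    show γ • (cfcₙ f a * cfcₙ f a) ≤ cfcₙ g a
    rw [← cfcₙ_mul f f a hf.continuousOn hf0 hf.continuousOn hf0,
        ← cfcₙ_smul γ _ a (by exact (hf.mul hf).continuousOn) (by simp [hf0])]
    exact cfcₙ_mono (fun x hx => by simpa [smul_eq_mul] using fact2 x (hspec x hx))
      (by exact Continuous.continuousOn (by continuity)) hg.continuousOn
      (by simp [hf0]) hg0
  have hnorm_aγ : ‖aγ‖ ≤ ‖a‖ - γ := by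
    apply norm_cfcₙ_le
    intro x hx
    have hx0 := hspec x hx
    have hxle : x ≤ ‖a‖ := by
      have := norm_apply_le_norm_cfcₙ (id : ℝ → ℝ) a hx continuousOn_id rfl (IsSelfAdjoint.of_nonneg ha)
      rw [cfcₙ_id ℝ a (IsSelfAdjoint.of_nonneg ha)] at this
      calc x = ‖(id x : ℝ)‖ := by simp [abs_of_nonneg hx0]
        _ ≤ ‖a‖ := this
    rw [Real.norm_eq_abs, abs_of_nonneg (le_max_right _ _)]
    exact max_le (by linarith) (by linarith)
  refine ⟨he, hnorm_e, heae, fun d => ?_⟩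
  -- main inequality
  have hmain : γ • (star (e * d) * (e * d)) ≤ star d * aγ * d := by
    have h1 : star (e * d) * (e * d) = star d * (e * e) * d := by
      rw [star_mul, hesa.star_eq]
      noncomm_ring
    rw [h1]
    calc γ • (star d * (e * e) * d) = star d * (γ • (e * e)) * d := by
          rw [mul_smul_comm, smul_mul_assoc]
      _ ≤ star d * aγ * d := star_left_conjugate_le_conjugate hkey d
  have hs_nonneg : (0 : A) ≤ γ • (star (e * d) * (e * d)) :=
    smul_nonneg hγ0.le (star_mul_self_nonneg _)
  have hnorm1 : γ * ‖e * d‖ ^ 2 ≤ ‖star d * aγ * d‖ := by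
    have := CStarAlgebra.norm_le_norm_of_nonneg_of_le hs_nonneg hmain
    rwa [norm_smul, Real.norm_eq_abs, abs_of_pos hγ0, CStarRing.norm_star_mul_self,
      ← pow_two] at this
  refine ⟨hmain, ?_, ?_⟩
  · have h2 : ‖star d * aγ * d‖ ≤ ‖aγ * d‖ * ‖d‖ := by
      calc ‖star d * aγ * d‖ = ‖star d * (aγ * d)‖ := by rw [mul_assoc]
        _ ≤ ‖star d‖ * ‖aγ * d‖ := norm_mul_le _ _
        _ = ‖aγ * d‖ * ‖d‖ := by rw [norm_star, mul_comm]
    have : γ * ‖e * d‖ ^ 2 ≤ γ + ‖aγ * d‖ * ‖d‖ := by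
      have := hnorm1.trans h2
      linarith
    calc ‖e * d‖ ^ 2 = γ⁻¹ * (γ * ‖e * d‖ ^ 2) := by
          field_simp
      _ ≤ γ⁻¹ * (γ + ‖aγ * d‖ * ‖d‖) := by
          apply mul_le_mul_of_nonneg_left this (inv_nonneg.mpr hγ0.le)
  · intro hd
    have h3 : ‖star d * aγ * d‖ ≤ ‖aγ‖ + ‖star d * aγ * d - aγ‖ := by
      calc ‖star d * aγ * d‖ = ‖aγ + (star d * aγ * d - aγ)‖ := by rw [add_sub_cancel]
        _ ≤ ‖aγ‖ + ‖star d * aγ * d - aγ‖ := norm_add_le _ _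
    have : γ * ‖e * d‖ ^ 2 ≤ ‖a‖ := by
      have := hnorm1.trans h3
      linarith
    rw [div_eq_inv_mul, ← mul_le_mul_iff_right₀ hγ0, ← mul_assoc, mul_inv_cancel₀ hγ0.ne',
      one_mul]
    exact this
end
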